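/- arXiv:1606.03529 — 8 statements merged into one kernel-verified Lean document; each statement's English description precedes it below -/
import Mathlib

section
/- Let F ∈ ℝ^{n×r} be a full column rank matrix and G ∈ ℝ^{n×r}. Then FGᵀ + GFᵀ is positive semidefinite if and only if there exists Ω ∈ ℝ^{r×r} such that G = FΩ and Ω + Ωᵀ is positive semidefinite. -/
open Matrix

theorem stmt_6 (n r : ℕ) (F G : Matrix (Fin n) (Fin r) ℝ)
    (hF : F.rank = r) :
    (F * Gᵀ + G * Fᵀ).PosSemidef ↔
      ∃ Ω : Matrix (Fin r) (Fin r) ℝ, G = F * Ω ∧ (Ω + Ωᵀ).PosSemidef := by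
  constructor
  · intro hA
    -- F has trivial kernel
    have hker : LinearMap.ker F.mulVecLin = ⊥ := by
      have h := F.mulVecLin.finrank_range_add_finrank_ker
      rw [Matrix.rank] at hF
      rw [hF] at h
      simp [Module.finrank_pi] at h
      exact h
    have hinj : Function.Injective F.mulVec :=
      (LinearMap.ker_eq_bot (f := F.mulVecLin)).mp hker
    -- Fᵀ is surjective
    have hsurj : ∀ z : Fin r → ℝ, ∃ x, Fᵀ *ᵥ x = z := by
      have hr : LinearMap.range Fᵀ.mulVecLin = ⊤ := by
        apply Submodule.eq_top_of_finrank_eq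
        have : Fᵀ.rank = r := by rw [F.rank_transpose, hF]
        rw [Matrix.rank] at this
        simpa [Module.finrank_pi] using this
      have h := (LinearMap.range_eq_top (f := Fᵀ.mulVecLin)).mp hr
      intro z
      obtain ⟨x, hx⟩ := h z
      exact ⟨x, hx⟩
    -- key: Fᵀ x = 0 → Gᵀ x = 0
    have key : ∀ x : Fin n → ℝ, Fᵀ *ᵥ x = 0 → Gᵀ *ᵥ x = 0 := by
      intro x hx
      have h0 : star x ⬝ᵥ (F * Gᵀ + G * Fᵀ) *ᵥ x = 0 := by
        rw [star_trivial, add_mulVec, ← mulVec_mulVec, ← mulVec_mulVec, hx, mulVec_zero,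
          add_zero, dotProduct_mulVec, ← mulVec_transpose, hx, zero_dotProduct]
      have hAx := (hA.dotProduct_mulVec_zero_iff x).mp h0
      rw [add_mulVec, ← mulVec_mulVec, ← mulVec_mulVec, hx, mulVec_zero, add_zero] at hAx
      have : F *ᵥ (Gᵀ *ᵥ x) = F *ᵥ 0 := by rw [hAx, mulVec_zero]
      exact hinj this
    -- FᵀF is invertible
    have hMk : LinearMap.ker (Fᵀ * F).mulVecLin = ⊥ := by
      rw [ker_mulVecLin_transpose_mul_self]; exact hker
    have hMinj : Function.Injective (Fᵀ * F).mulVec :=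
      (LinearMap.ker_eq_bot (f := (Fᵀ * F).mulVecLin)).mp hMk
    have hM : IsUnit (Fᵀ * F) := mulVec_injective_iff_isUnit.mp hMinj
    have hMdet : IsUnit (Fᵀ * F).det := (isUnit_iff_isUnit_det _).mp hM
    set M : Matrix (Fin r) (Fin r) ℝ := Fᵀ * F with hMdef
    have hMsymm : Mᵀ = M := by rw [hMdef, transpose_mul, transpose_transpose]
    have hMinvT : (M⁻¹)ᵀ = M⁻¹ := by rw [transpose_nonsing_inv, hMsymm]
    set Ω : Matrix (Fin r) (Fin r) ℝ := M⁻¹ * (Fᵀ * G) with hΩdef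
    have hGT : Gᵀ = Gᵀ * F * M⁻¹ * Fᵀ := by
      ext i j
      have hv : ∀ x : Fin n → ℝ, Gᵀ *ᵥ x = (Gᵀ * F * M⁻¹ * Fᵀ) *ᵥ x := by
        intro x
        have hy : Fᵀ *ᵥ (x - (F * M⁻¹ * Fᵀ) *ᵥ x) = 0 := by
          rw [mulVec_sub, mulVec_mulVec, show Fᵀ * (F * M⁻¹ * Fᵀ) = Fᵀ by
            rw [← Matrix.mul_assoc, ← Matrix.mul_assoc, ← hMdef,
              Matrix.mul_nonsing_inv _ hMdet, Matrix.one_mul], sub_self]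
        have h2 := key _ hy
        rw [mulVec_sub, sub_eq_zero] at h2
        rw [h2, mulVec_mulVec, ← Matrix.mul_assoc, ← Matrix.mul_assoc]
      have := congrFun (hv (Pi.single j 1)) i
      simpa [mulVec_single] using this
    have hFO : G = F * Ω := by
      calc G = Gᵀᵀ := (transpose_transpose G).symm
        _ = (Gᵀ * F * M⁻¹ * Fᵀ)ᵀ := by rw [← hGT]
        _ = F * Ω := by
            rw [hΩdef]
            simp [transpose_mul, hMinvT, Matrix.mul_assoc]
    refine ⟨Ω, hFO, posSemidef_iff_dotProduct_mulVec.mpr ⟨?_, ?_⟩⟩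
    · rw [IsHermitian, conjTranspose_add, conjTranspose_eq_transpose_of_trivial,
        conjTranspose_eq_transpose_of_trivial, transpose_transpose, add_comm]
    · intro z
      obtain ⟨x, hx⟩ := hsurj z
      have hmat : F * (Ω + Ωᵀ) * Fᵀ = F * Gᵀ + G * Fᵀ := by
        simp only [hFO, transpose_mul, Matrix.mul_add, Matrix.add_mul, Matrix.mul_assoc]
        exact add_comm _ _
      have hdot : z ⬝ᵥ (Ω + Ωᵀ) *ᵥ z = x ⬝ᵥ (F * (Ω + Ωᵀ) * Fᵀ) *ᵥ x := by
        rw [← mulVec_mulVec, ← mulVec_mulVec, dotProduct_mulVec x F, ← mulVec_transpose, hx]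
      have h2 := (posSemidef_iff_dotProduct_mulVec.mp hA).2 x
      rw [star_trivial] at h2
      rw [star_trivial, hdot, hmat]
      exact h2
  · rintro ⟨Ω, rfl, hΩ⟩
    have h := hΩ.mul_mul_conjTranspose_same F
    have he : F * (Ω + Ωᵀ) * Fᴴ = F * (F * Ω)ᵀ + F * Ω * Fᵀ := by
      rw [conjTranspose_eq_transpose_of_trivial, Matrix.mul_add, Matrix.add_mul,
        transpose_mul, add_comm, ← Matrix.mul_assoc]
    rwa [he] at h
end

section
/- Let A ∈ ℝ^{n×n}, B_2 ∈ ℝ^{n×m_2}. There exists a nonzero positive semidefinite Z ∈ S^n with He(AᵀZ) := AᵀZ + ZA positive semidefinite and B_2ᵀZ = 0 if and only if there exists λ ∈ ℂ with Re(λ) ≥ 0 such that rank(A − λ I_n, B_2) < n (i.e., (A, B_2) is not stabilizable). -/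
open Matrix
open scoped ComplexOrder

lemma rank_lt_iff_exists {n : ℕ} {κ : Type*} [Fintype κ] (M : Matrix (Fin n) κ ℂ) :
    M.rank < n ↔ ∃ w : Fin n → ℂ, w ≠ 0 ∧ w ᵥ* M = 0 := by
  rw [← Matrix.rank_transpose]
  have hrn := LinearMap.finrank_range_add_finrank_ker (Mᵀ.mulVecLin)
  have hfin : Module.finrank ℂ (Fin n → ℂ) = n := by simp
  rw [hfin] at hrn
  constructor
  · intro h
    have hk : LinearMap.ker (Mᵀ.mulVecLin) ≠ ⊥ := by
      intro hbot
      rw [hbot, finrank_bot] at hrn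
      change Mᵀ.rank + 0 = n at hrn
      omega
    obtain ⟨w, hw, hw0⟩ := Submodule.exists_mem_ne_zero_of_ne_bot hk
    exact ⟨w, hw0, by rw [← Matrix.mulVec_transpose]; exact hw⟩
  · rintro ⟨w, hw0, hw⟩
    have hk : LinearMap.ker (Mᵀ.mulVecLin) ≠ ⊥ := by
      intro hbot
      have : w ∈ LinearMap.ker (Mᵀ.mulVecLin) := by
        simp [LinearMap.mem_ker, Matrix.mulVecLin_apply, Matrix.mulVec_transpose, hw]
      rw [hbot, Submodule.mem_bot] at this
      exact hw0 this
    have : 0 < Module.finrank ℂ (LinearMap.ker (Mᵀ.mulVecLin)) := by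
      rwa [Module.finrank_pos_iff, Submodule.nontrivial_iff_ne_bot]
    change Mᵀ.rank + _ = n at hrn
    omega

lemma re_sum_ofReal_mul {ι : Type*} (s : Finset ι) (a : ι → ℝ) (f : ι → ℂ) :
    ∑ k ∈ s, a k * (f k).re = (∑ k ∈ s, (a k : ℂ) * f k).re := by
  rw [Complex.re_sum]
  exact Finset.sum_congr rfl fun k _ => (Complex.re_ofReal_mul _ _).symm

lemma mapC_mul {l m o : Type*} [Fintype m] (M : Matrix l m ℝ) (N : Matrix m o ℝ) :
    (M * N).map Complex.ofReal = M.map Complex.ofReal * N.map Complex.ofReal := by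
  ext i j
  simp [Matrix.mul_apply, Matrix.map_apply]

lemma mapC_conjTranspose {l m : Type*} (M : Matrix l m ℝ) :
    (M.map Complex.ofReal)ᴴ = Mᵀ.map Complex.ofReal := by
  ext i j
  simp [Matrix.conjTranspose_apply, Matrix.map_apply, Complex.conj_ofReal]

lemma mapC_posSemidef {n : Type*} [Fintype n] [DecidableEq n] {M : Matrix n n ℝ}
    (hM : M.PosSemidef) : (M.map Complex.ofReal).PosSemidef := by
  obtain ⟨m, v, rfl⟩ := Matrix.posSemidef_iff_eq_sum_vecMulVec.mp hM
  refine Matrix.posSemidef_iff_eq_sum_vecMulVec.mpr ⟨m, fun i j => (v i j : ℂ), ?_⟩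
  ext a b
  simp [Matrix.sum_apply, vecMulVec_apply]


private lemma construct_Z (n m₂ : ℕ) (A : Matrix (Fin n) (Fin n) ℝ)
    (B₂ : Matrix (Fin n) (Fin m₂) ℝ) (lam : ℂ) (hre : 0 ≤ lam.re)
    (w : Fin n → ℂ) (hw0 : w ≠ 0)
    (hwA : w ᵥ* (A.map Complex.ofReal) = lam • w)
    (hwB : w ᵥ* (B₂.map Complex.ofReal) = 0) :
    ∃ Z : Matrix (Fin n) (Fin n) ℝ, Z ≠ 0 ∧ Z.PosSemidef ∧
      (Aᵀ * Z + Z * A).PosSemidef ∧ B₂ᵀ * Z = 0 := by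
  set Z : Matrix (Fin n) (Fin n) ℝ := fun i j => (w i * (starRingEnd ℂ) (w j)).re with hZdef
  have hZap : ∀ i j, Z i j = (w i * (starRingEnd ℂ) (w j)).re := fun i j => rfl
  have hZpsd : Z.PosSemidef := by
    rw [Matrix.posSemidef_iff_dotProduct_mulVec]
    constructor
    · ext i j
      simp only [conjTranspose_apply, star_trivial, hZap]
      have : w i * (starRingEnd ℂ) (w j) = (starRingEnd ℂ) (w j * (starRingEnd ℂ) (w i)) := by
        simp [mul_comm]
      rw [this, Complex.conj_re]
    · intro x
      have key : (star x) ⬝ᵥ (Z *ᵥ x)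
          = Complex.normSq (∑ i, (x i : ℂ) * w i) := by
        simp only [star_trivial, dotProduct, mulVec, hZap]
        calc ∑ i, x i * ∑ j, (w i * (starRingEnd ℂ) (w j)).re * x j
            = ∑ i, x i * ∑ j, x j * (w i * (starRingEnd ℂ) (w j)).re := by
              refine Finset.sum_congr rfl fun i _ => ?_
              congr 1
              exact Finset.sum_congr rfl fun j _ => by ring
          _ = ∑ i, x i * (∑ j, (x j : ℂ) * (w i * (starRingEnd ℂ) (w j))).re := by
              exact Finset.sum_congr rfl fun i _ => by rw [re_sum_ofReal_mul]
          _ = (∑ i, (x i : ℂ) * ∑ j, (x j : ℂ) * (w i * (starRingEnd ℂ) (w j))).re := by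
              rw [re_sum_ofReal_mul]
          _ = ((∑ i, (x i : ℂ) * w i) * (starRingEnd ℂ) (∑ j, (x j : ℂ) * w j)).re := by
              congr 1
              rw [map_sum, Finset.sum_mul]
              refine Finset.sum_congr rfl fun i _ => ?_
              rw [Finset.mul_sum, Finset.mul_sum]
              refine Finset.sum_congr rfl fun j _ => ?_
              simp only [_root_.map_mul, Complex.conj_ofReal]
              ring
          _ = Complex.normSq (∑ i, (x i : ℂ) * w i) := by
              rw [Complex.mul_conj, Complex.ofReal_re]
      rw [key]
      exact Complex.normSq_nonneg _
  refine ⟨Z, ?_, hZpsd, ?_, ?_⟩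
  · -- nonzero
    obtain ⟨i, hi⟩ := Function.ne_iff.mp hw0
    intro h
    have h2 := congrFun (congrFun h i) i
    rw [hZap, show ((0 : Matrix (Fin n) (Fin n) ℝ) i i) = 0 from rfl, Complex.mul_conj] at h2
    exact hi (by simpa using Complex.normSq_eq_zero.mp (by exact_mod_cast h2))
  · -- He PSD
    have hAw : ∀ i, ∑ k, (A k i : ℂ) * w k = lam * w i := by
      intro i
      have := congrFun hwA i
      simp only [vecMul, dotProduct, Matrix.map_apply, Pi.smul_apply, smul_eq_mul] at this
      rw [← this]
      exact Finset.sum_congr rfl fun k _ => by ring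
    have heq : Aᵀ * Z + Z * A = (2 * lam.re) • Z := by
      ext i j
      simp only [Matrix.add_apply, Matrix.mul_apply, Matrix.transpose_apply,
        Matrix.smul_apply, smul_eq_mul, hZap]
      have h1 : ∑ k, A k i * (w k * (starRingEnd ℂ) (w j)).re
          = (lam * (w i * (starRingEnd ℂ) (w j))).re := by
        rw [re_sum_ofReal_mul]
        congr 1
        calc ∑ k, (A k i : ℂ) * (w k * (starRingEnd ℂ) (w j))
            = (∑ k, (A k i : ℂ) * w k) * (starRingEnd ℂ) (w j) := by
              rw [Finset.sum_mul]
              exact Finset.sum_congr rfl fun k _ => (mul_assoc _ _ _).symm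
          _ = lam * (w i * (starRingEnd ℂ) (w j)) := by rw [hAw]; ring
      have h2 : ∑ k, (w i * (starRingEnd ℂ) (w k)).re * A k j
          = ((starRingEnd ℂ) lam * (w i * (starRingEnd ℂ) (w j))).re := by
        calc ∑ k, (w i * (starRingEnd ℂ) (w k)).re * A k j
            = ∑ k, A k j * (w i * (starRingEnd ℂ) (w k)).re := by
              exact Finset.sum_congr rfl fun k _ => by ring
          _ = (∑ k, (A k j : ℂ) * (w i * (starRingEnd ℂ) (w k))).re := re_sum_ofReal_mul _ _ _
          _ = ((starRingEnd ℂ) lam * (w i * (starRingEnd ℂ) (w j))).re := by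
              congr 1
              calc ∑ k, (A k j : ℂ) * (w i * (starRingEnd ℂ) (w k))
                  = w i * (starRingEnd ℂ) (∑ k, (A k j : ℂ) * w k) := by
                    rw [map_sum, Finset.mul_sum]
                    refine Finset.sum_congr rfl fun k _ => ?_
                    simp only [_root_.map_mul, Complex.conj_ofReal]
                    ring
                _ = (starRingEnd ℂ) lam * (w i * (starRingEnd ℂ) (w j)) := by
                    rw [hAw]
                    simp only [_root_.map_mul]
                    ring
      rw [h1, h2, ← Complex.add_re, ← add_mul, Complex.add_conj, Complex.re_ofReal_mul]
    rw [heq]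
    obtain ⟨hherm, hquad⟩ := Matrix.posSemidef_iff_dotProduct_mulVec.mp hZpsd
    rw [Matrix.posSemidef_iff_dotProduct_mulVec]
    constructor
    · ext i j
      simp only [Matrix.conjTranspose_apply, Matrix.smul_apply, star_trivial, smul_eq_mul]
      have := congrFun (congrFun hherm i) j
      simp only [Matrix.conjTranspose_apply, star_trivial] at this
      rw [this]
    · intro x
      rw [smul_mulVec, dotProduct_smul, smul_eq_mul]
      have h0 : (0:ℝ) ≤ 2 * lam.re := by linarith
      exact mul_nonneg h0 (hquad x)
  · -- B₂ᵀ * Z = 0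
    ext i j
    simp only [Matrix.mul_apply, transpose_apply, Matrix.zero_apply, hZap]
    have hB : (∑ k, (B₂ k i : ℂ) * w k) = 0 := by
      have := congrFun hwB i
      simpa [vecMul, dotProduct, mul_comm] using this
    calc ∑ k, B₂ k i * (w k * (starRingEnd ℂ) (w j)).re
        = (∑ k, (B₂ k i : ℂ) * (w k * (starRingEnd ℂ) (w j))).re := re_sum_ofReal_mul _ _ _
      _ = ((∑ k, (B₂ k i : ℂ) * w k) * (starRingEnd ℂ) (w j)).re := by
          rw [Finset.sum_mul]
          congr 1
          exact Finset.sum_congr rfl fun k _ => (mul_assoc _ _ _).symm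
      _ = 0 := by rw [hB, zero_mul, Complex.zero_re]

private lemma exists_eigen (n m₂ : ℕ) (A : Matrix (Fin n) (Fin n) ℝ)
    (B₂ : Matrix (Fin n) (Fin m₂) ℝ)
    (Z : Matrix (Fin n) (Fin n) ℝ) (hZ0 : Z ≠ 0) (hZ : Z.PosSemidef)
    (hM : (Aᵀ * Z + Z * A).PosSemidef) (hB : B₂ᵀ * Z = 0) :
    ∃ (lam : ℂ) (w : Fin n → ℂ), 0 ≤ lam.re ∧ w ≠ 0 ∧
      w ᵥ* (A.map Complex.ofReal) = lam • w ∧ w ᵥ* (B₂.map Complex.ofReal) = 0 := by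
  set Ac := A.map Complex.ofReal with hAc
  set Zc := Z.map Complex.ofReal with hZc
  set B₂c := B₂.map Complex.ofReal with hB₂c
  have hZcps : Zc.PosSemidef := mapC_posSemidef hZ
  have hZch : Zcᴴ = Zc := hZcps.1
  have hMc : (Acᵀ * Zc + Zc * Ac).PosSemidef := by
    have h := mapC_posSemidef hM
    have : (Aᵀ * Z + Z * A).map Complex.ofReal = Acᵀ * Zc + Zc * Ac := by
      rw [Matrix.map_add, mapC_mul, mapC_mul]
      · rfl
      · exact fun _ _ => Complex.ofReal_add _ _
    rwa [this] at h
  have hBc : B₂cᵀ * Zc = 0 := by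
    have : (B₂ᵀ * Z).map Complex.ofReal = B₂cᵀ * Zc := by
      rw [mapC_mul]; rfl
    rw [hB] at this
    rw [← this]
    ext i j; simp
  have hAcH : Acᴴ = Acᵀ := by
    ext i j; simp [hAc, Matrix.conjTranspose_apply, Matrix.map_apply, Complex.conj_ofReal]
  -- star x ᵥ* Zc = star (Zc *ᵥ x)
  have hstar : ∀ x : Fin n → ℂ, star x ᵥ* Zc = star (Zc *ᵥ x) := by
    intro x
    rw [Matrix.star_mulVec, hZch]
  -- kernel invariance
  have hker : ∀ x : Fin n → ℂ, Zc *ᵥ x = 0 → Zc *ᵥ (Ac *ᵥ x) = 0 := by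
    intro x hx
    have hq : star x ⬝ᵥ ((Acᵀ * Zc + Zc * Ac) *ᵥ x) = 0 := by
      rw [Matrix.add_mulVec, ← Matrix.mulVec_mulVec, ← Matrix.mulVec_mulVec, hx,
        Matrix.mulVec_zero, zero_add, dotProduct_mulVec, hstar, hx]
      simp
    have h0 := (hMc.dotProduct_mulVec_zero_iff x).mp hq
    rw [Matrix.add_mulVec, ← Matrix.mulVec_mulVec, ← Matrix.mulVec_mulVec, hx,
      Matrix.mulVec_zero, zero_add] at h0
    exact h0
  set W := LinearMap.range Zc.mulVecLin with hW
  -- orthogonality to kernel implies range membership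
  have hrange : ∀ v : Fin n → ℂ, (∀ y, Zc *ᵥ y = 0 → star y ⬝ᵥ v = 0) → v ∈ W := by
    intro v hv
    set K := LinearMap.ker Zc.mulVecLin with hK
    have hWK : W ⊓ K = ⊥ := by
      rw [Submodule.eq_bot_iff]
      rintro x ⟨hxW, hxK⟩
      obtain ⟨u, hu⟩ := hxW
      have hu' : Zc *ᵥ u = x := hu
      have hxK' : Zc *ᵥ x = 0 := hxK
      have : star x ⬝ᵥ x = 0 := by
        nth_rewrite 2 [← hu']
        rw [dotProduct_mulVec, hstar, hxK']
        simp
      exact dotProduct_star_self_eq_zero.mp this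
    have hsum : W ⊔ K = ⊤ := by
      apply Submodule.eq_top_of_finrank_eq
      have h1 := Submodule.finrank_sup_add_finrank_inf_eq W K
      have h2 := LinearMap.finrank_range_add_finrank_ker Zc.mulVecLin
      rw [hWK, finrank_bot] at h1
      rw [← hK, ← hW] at h2
      simp only [Module.finrank_pi, Fintype.card_fin] at h2 ⊢
      omega
    have hv' : v ∈ W ⊔ K := by rw [hsum]; trivial
    obtain ⟨p, hp, q, hq, hpq⟩ := Submodule.mem_sup.mp hv'
    have hq0 : q = 0 := by
      have hqK : Zc *ᵥ q = 0 := hq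
      obtain ⟨u, hu⟩ := hp
      have hu2 : Zc *ᵥ u = p := hu
      have h1 : star q ⬝ᵥ v = 0 := hv q hqK
      have h2 : star q ⬝ᵥ p = 0 := by
        rw [← hu2]
        show star q ⬝ᵥ (Zc *ᵥ u) = 0
        rw [dotProduct_mulVec, hstar, hqK]
        simp
      have : star q ⬝ᵥ q = 0 := by
        have := congrArg (fun t => star q ⬝ᵥ t) hpq
        simp only [dotProduct_add] at this
        rw [h2, zero_add] at this
        rw [this, h1]
      exact dotProduct_star_self_eq_zero.mp this
    rw [hq0, add_zero] at hpq
    rw [← hpq]; exact hp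
  -- W invariant under Acᵀ
  have hinv : ∀ x ∈ W, Acᵀ.mulVecLin x ∈ W := by
    intro x hxW
    obtain ⟨u, hu⟩ := hxW
    have hu3 : Zc *ᵥ u = x := hu
    apply hrange
    intro y hy
    show star y ⬝ᵥ (Acᵀ *ᵥ x) = 0
    rw [dotProduct_mulVec]
    have : star y ᵥ* Acᵀ = star (Ac *ᵥ y) := by
      rw [Matrix.star_mulVec, hAcH]
    rw [this, ← hu3]
    show star (Ac *ᵥ y) ⬝ᵥ (Zc *ᵥ u) = 0
    rw [dotProduct_mulVec, hstar, hker y hy]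
    simp
  -- W nontrivial
  have hWne : Nontrivial W := by
    rw [Submodule.nontrivial_iff_ne_bot]
    intro hbot
    apply hZ0
    ext i j
    have : Zc *ᵥ Pi.single j 1 ∈ W := ⟨Pi.single j 1, rfl⟩
    rw [hbot, Submodule.mem_bot] at this
    have h2 := congrFun this i
    simp only [mulVec, dotProduct, Pi.single_apply, mul_ite, mul_one, mul_zero,
      Finset.sum_ite_eq', Finset.mem_univ, if_true, Pi.zero_apply] at h2
    have : Zc i j = 0 := h2
    rw [hZc] at this
    simpa [Matrix.map_apply] using this
  -- eigenvector
  set f : W →ₗ[ℂ] W := (Acᵀ.mulVecLin).restrict hinv with hf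
  obtain ⟨lam, hlam⟩ := Module.End.exists_eigenvalue f
  obtain ⟨ww, hww⟩ := hlam.exists_hasEigenvector
  set w : Fin n → ℂ := (ww : Fin n → ℂ) with hwdef
  have hw0 : w ≠ 0 := fun h => hww.right (by exact_mod_cast Subtype.ext h)
  have hweig : Acᵀ *ᵥ w = lam • w := by
    have := hww.apply_eq_smul
    have h2 := congrArg (Subtype.val) this
    rw [LinearMap.restrict_coe_apply] at h2
    exact h2
  have hwW : w ∈ W := ww.2
  obtain ⟨u, hu⟩ := hwW
  have hu' : Zc *ᵥ u = w := hu
  -- the quadratic form value t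
  set t : ℂ := star u ⬝ᵥ (Zc *ᵥ u) with ht
  have ht0 : 0 ≤ t := hZcps.dotProduct_mulVec_nonneg u
  have htne : t ≠ 0 := by
    intro h
    exact hw0 (by rw [← hu']; exact (hZcps.dotProduct_mulVec_zero_iff u).mp h)
  have htre : 0 < t.re := by
    rcases (Complex.le_def.mp ht0) with ⟨hre, him⟩
    simp only [Complex.zero_re, Complex.zero_im] at hre him
    rcases lt_or_eq_of_le hre with h | h
    · exact h
    · exact absurd (Complex.ext h.symm him.symm) htne
  have htconj : (starRingEnd ℂ) t = t := by
    apply Complex.ext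
    · simp [Complex.conj_re]
    · rcases (Complex.le_def.mp ht0) with ⟨_, him⟩
      simp only [Complex.zero_im] at him
      simp [Complex.conj_im, ← him]
  -- the key computation
  have hq : star u ⬝ᵥ ((Acᵀ * Zc + Zc * Ac) *ᵥ u) = (lam + (starRingEnd ℂ) lam) * t := by
    rw [Matrix.add_mulVec, ← Matrix.mulVec_mulVec, ← Matrix.mulVec_mulVec, hu', hweig,
      dotProduct_add]
    have h1 : star u ⬝ᵥ (lam • w) = lam * t := by
      rw [dotProduct_smul, smul_eq_mul, ht, hu']
    have h2 : star u ⬝ᵥ (Zc *ᵥ (Ac *ᵥ u)) = (starRingEnd ℂ) lam * t := by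
      rw [dotProduct_mulVec, hstar, hu']
      have h3 : star w ᵥ* Ac = star (lam • w) := by
        rw [← conjTranspose_conjTranspose Ac, ← Matrix.star_mulVec, hAcH, hweig]
      rw [dotProduct_mulVec, h3]
      have : star (lam • w) = (starRingEnd ℂ) lam • star w := by
        ext i; simp [Pi.smul_apply, smul_eq_mul, _root_.map_mul]
      rw [this, smul_dotProduct, smul_eq_mul]
      congr 1
      have hsw : star w ⬝ᵥ u = (starRingEnd ℂ) (star u ⬝ᵥ w) := by
        simp only [dotProduct, map_sum]
        refine Finset.sum_congr rfl fun i _ => ?_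
        simp only [Pi.star_apply, _root_.map_mul, starRingEnd_apply, star_star]
        ring
      rw [hsw, ← hu', ← ht, htconj]
    rw [h1, h2]; ring
  have hqpos : 0 ≤ (lam + (starRingEnd ℂ) lam) * t := hq ▸ hMc.dotProduct_mulVec_nonneg u
  have hre : 0 ≤ lam.re := by
    have : ((lam + (starRingEnd ℂ) lam) * t).re = 2 * lam.re * t.re := by
      rw [Complex.add_conj, Complex.re_ofReal_mul]
    rcases Complex.le_def.mp hqpos with ⟨h1, _⟩
    rw [Complex.zero_re, this] at h1
    nlinarith
  -- conclusion
  refine ⟨lam, w, hre, hw0, ?_, ?_⟩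
  · rw [← Matrix.mulVec_transpose, hweig]
  · rw [← Matrix.mulVec_transpose]
    rw [← hu', Matrix.mulVec_mulVec]
    show (B₂cᵀ * Zc) *ᵥ u = 0
    rw [hBc, Matrix.zero_mulVec]

theorem stmt_7 (n m₂ : ℕ) (A : Matrix (Fin n) (Fin n) ℝ)
    (B₂ : Matrix (Fin n) (Fin m₂) ℝ) :
    (∃ Z : Matrix (Fin n) (Fin n) ℝ, Z ≠ 0 ∧ Z.PosSemidef ∧
      (Aᵀ * Z + Z * A).PosSemidef ∧ B₂ᵀ * Z = 0) ↔
    (∃ lam : ℂ, 0 ≤ lam.re ∧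
      (Matrix.fromCols (A.map Complex.ofReal - lam • 1) (B₂.map Complex.ofReal)).rank < n) := by
  constructor
  · rintro ⟨Z, hZ0, hZ, hM, hB⟩
    obtain ⟨lam, w, hre, hw0, hwA, hwB⟩ := exists_eigen n m₂ A B₂ Z hZ0 hZ hM hB
    refine ⟨lam, hre, (rank_lt_iff_exists _).mpr ⟨w, hw0, ?_⟩⟩
    rw [Matrix.vecMul_fromCols, hwB]
    have h1 : w ᵥ* (A.map Complex.ofReal - lam • 1) = 0 := by
      rw [Matrix.vecMul_sub, hwA, ← Matrix.mulVec_transpose, Matrix.transpose_smul,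
        Matrix.transpose_one, Matrix.smul_mulVec, Matrix.one_mulVec, sub_self]
    rw [h1]
    ext (i | j) <;> rfl
  · rintro ⟨lam, hre, hrank⟩
    obtain ⟨w, hw0, hw⟩ := (rank_lt_iff_exists _).mp hrank
    rw [Matrix.vecMul_fromCols] at hw
    have h1 : w ᵥ* (A.map Complex.ofReal - lam • 1) = 0 :=
      funext fun j => congrFun hw (Sum.inl j)
    have h2 : w ᵥ* (B₂.map Complex.ofReal) = 0 :=
      funext fun j => congrFun hw (Sum.inr j)
    have hwA : w ᵥ* (A.map Complex.ofReal) = lam • w := by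
      rw [Matrix.vecMul_sub] at h1
      have h3 : w ᵥ* (lam • (1 : Matrix (Fin n) (Fin n) ℂ)) = lam • w := by
        rw [← Matrix.mulVec_transpose, Matrix.transpose_smul, Matrix.transpose_one,
          Matrix.smul_mulVec, Matrix.one_mulVec]
      rw [h3] at h1
      exact sub_eq_zero.mp h1
    exact construct_Z n m₂ A B₂ lam hre w hw0 hwA h2
end

section
/- (Only-if direction) Let Z ∈ S^n be nonzero positive semidefinite with AᵀZ + ZA positive semidefinite and B_2ᵀZ = 0. Write Z = HHᵀ with H ∈ ℝ^{n×r} of full column rank, r = rank(Z). Then there exist λ ∈ ℂ with Re(λ) ≥ 0 and a nonzero vector v ∈ ℂ^n such that Aᵀv = λv and B_2ᵀv = 0. -/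
open Matrix
open scoped ComplexOrder

private lemma aux_mat_eq_zero {m k l : ℕ} (M : Matrix (Fin m) (Fin k) ℝ)
    (h : ∀ x : Fin k → ℝ, M *ᵥ x = 0) : M = 0 := by
  ext i j
  have := congrFun (h (Pi.single j 1)) i
  simpa using this

theorem stmt_8 (n m₂ r : ℕ) (A : Matrix (Fin n) (Fin n) ℝ)
    (B₂ : Matrix (Fin n) (Fin m₂) ℝ)
    (Z : Matrix (Fin n) (Fin n) ℝ) (hZne : Z ≠ 0) (hZ : Z.PosSemidef)
    (hHe : (Aᵀ * Z + Z * A).PosSemidef) (hB : B₂ᵀ * Z = 0)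
    (H : Matrix (Fin n) (Fin r) ℝ) (hfact : Z = H * Hᵀ)
    (hfull : H.rank = r) (hr : r = Z.rank) :
    ∃ lam : ℂ, 0 ≤ lam.re ∧ ∃ v : Fin n → ℂ, v ≠ 0 ∧
      (Aᵀ.map Complex.ofReal).mulVec v = lam • v ∧
      (B₂ᵀ.map Complex.ofReal).mulVec v = 0 := by
  classical
  -- r > 0
  rcases Nat.eq_zero_or_pos r with hr0 | hrpos
  · exfalso
    apply hZne
    subst hr0
    ext i j
    simp [hfact, Matrix.mul_apply]
  haveI : Nonempty (Fin r) := Fin.pos_iff_nonempty.mp hrpos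
  -- injectivity of H
  have hInj : ∀ x : Fin r → ℝ, H *ᵥ x = 0 → x = 0 := by
    have hfull' : Module.finrank ℝ (LinearMap.range H.mulVecLin) = r := hfull
    have h1 := LinearMap.finrank_range_add_finrank_ker H.mulVecLin
    rw [hfull', Module.finrank_fin_fun] at h1
    have h2 : Module.finrank ℝ (LinearMap.ker H.mulVecLin) = 0 := by omega
    have h3 : LinearMap.ker H.mulVecLin = ⊥ := Submodule.finrank_eq_zero.mp h2
    intro x hx
    have : x ∈ LinearMap.ker H.mulVecLin := by
      simpa [LinearMap.mem_ker, Matrix.mulVecLin_apply] using hx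
    simpa [h3] using this
  -- Q := Hᵀ * H is positive definite
  have hQpsd : (Hᵀ * H).PosSemidef := by
    have := posSemidef_conjTranspose_mul_self (R := ℝ) H
    rwa [conjTranspose_eq_transpose_of_trivial] at this
  have hQ : (Hᵀ * H).PosDef := by
    refine PosDef.of_dotProduct_mulVec_pos hQpsd.1 (fun x hx => ?_)
    have hform : star x ⬝ᵥ (Hᵀ * H) *ᵥ x = (H *ᵥ x) ⬝ᵥ (H *ᵥ x) := by
      rw [star_trivial, ← mulVec_mulVec, dotProduct_mulVec, vecMul_transpose]
    rw [hform]
    have hxne : H *ᵥ x ≠ 0 := fun h => hx (hInj x h)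
    have hnn : 0 ≤ (H *ᵥ x) ⬝ᵥ (H *ᵥ x) :=
      Finset.sum_nonneg fun i _ => mul_self_nonneg _
    rcases hnn.lt_or_eq with h | h
    · exact h
    · exfalso
      apply hxne
      have : star (H *ᵥ x) ⬝ᵥ (H *ᵥ x) = 0 := by rw [star_trivial, ← h]
      exact dotProduct_star_self_eq_zero.mp this
  have hQd : IsUnit (Hᵀ * H).det := hQ.det_pos.ne'.isUnit
  have hQinv : (Hᵀ * H)⁻¹ * (Hᵀ * H) = 1 := nonsing_inv_mul _ hQd
  have hQinv' : (Hᵀ * H) * (Hᵀ * H)⁻¹ = 1 := mul_nonsing_inv _ hQd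
  have hQsymm : ((Hᵀ * H)⁻¹)ᵀ = (Hᵀ * H)⁻¹ := by
    rw [transpose_nonsing_inv, transpose_mul, transpose_transpose]
  -- B₂ᵀ * H = 0
  have hBH : B₂ᵀ * H = 0 := by
    have h1 : B₂ᵀ * H * (Hᵀ * H) = 0 := by
      have h0 : B₂ᵀ * (H * Hᵀ) * H = 0 := by rw [← hfact, hB, Matrix.zero_mul]
      calc B₂ᵀ * H * (Hᵀ * H) = B₂ᵀ * (H * Hᵀ) * H := by
            simp only [Matrix.mul_assoc]
        _ = 0 := h0
    calc B₂ᵀ * H = B₂ᵀ * H * ((Hᵀ * H) * (Hᵀ * H)⁻¹) := by rw [hQinv', Matrix.mul_one]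
      _ = (B₂ᵀ * H * (Hᵀ * H)) * (Hᵀ * H)⁻¹ := by simp only [Matrix.mul_assoc]
      _ = 0 := by rw [h1, Matrix.zero_mul]
  -- key invariance at vector level
  have hK : ∀ x : Fin n → ℝ, Hᵀ *ᵥ x = 0 → Hᵀ *ᵥ (A *ᵥ x) = 0 := by
    intro x hx
    have hZx : Z *ᵥ x = 0 := by
      rw [hfact, ← mulVec_mulVec, hx, mulVec_zero]
    have hM0 : (Aᵀ * Z + Z * A) *ᵥ x = 0 := by
      rw [← hHe.dotProduct_mulVec_zero_iff]
      rw [star_trivial, add_mulVec, dotProduct_add]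
      have t1 : x ⬝ᵥ (Aᵀ * Z) *ᵥ x = 0 := by
        rw [← mulVec_mulVec, hZx, mulVec_zero, dotProduct_zero]
      have t2 : x ⬝ᵥ (Z * A) *ᵥ x = 0 := by
        have hZsymm : Zᵀ = Z := by
          have h := hZ.1.eq
          rwa [conjTranspose_eq_transpose_of_trivial] at h
        rw [← mulVec_mulVec, dotProduct_mulVec, ← mulVec_transpose, hZsymm, hZx,
          zero_dotProduct]
      rw [t1, t2, add_zero]
    have h2 : Z *ᵥ (A *ᵥ x) = 0 := by
      rw [add_mulVec, ← mulVec_mulVec, ← mulVec_mulVec, hZx, mulVec_zero, zero_add] at hM0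
      exact hM0
    rw [hfact, ← mulVec_mulVec] at h2
    exact hInj _ h2
  -- the compressed matrix
  set Ab : Matrix (Fin r) (Fin r) ℝ := (Hᵀ * H)⁻¹ * (Hᵀ * (Aᵀ * H)) with hAb
  -- projection identity
  have hHP : Hᵀ * (1 - H * (Hᵀ * H)⁻¹ * Hᵀ) = 0 := by
    rw [Matrix.mul_sub, Matrix.mul_one]
    rw [show Hᵀ * (H * (Hᵀ * H)⁻¹ * Hᵀ) = (Hᵀ * H) * (Hᵀ * H)⁻¹ * Hᵀ by
      simp only [Matrix.mul_assoc]]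
    rw [hQinv', Matrix.one_mul, sub_self]
  have hKey : Hᵀ * A * (1 - H * (Hᵀ * H)⁻¹ * Hᵀ) = 0 := by
    apply aux_mat_eq_zero (l := 0)
    intro y
    have h1 : Hᵀ *ᵥ ((1 - H * (Hᵀ * H)⁻¹ * Hᵀ) *ᵥ y) = 0 := by
      rw [mulVec_mulVec, hHP, zero_mulVec]
    calc (Hᵀ * A * (1 - H * (Hᵀ * H)⁻¹ * Hᵀ)) *ᵥ y
        = Hᵀ *ᵥ (A *ᵥ ((1 - H * (Hᵀ * H)⁻¹ * Hᵀ) *ᵥ y)) := by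
          simp only [mulVec_mulVec, Matrix.mul_assoc]
      _ = 0 := hK _ h1
  -- Aᵀ * H = H * Ab
  have hHA : Hᵀ * A = Hᵀ * A * (H * (Hᵀ * H)⁻¹ * Hᵀ) := by
    have := hKey
    rw [Matrix.mul_sub, Matrix.mul_one, sub_eq_zero] at this
    exact this
  have hAH : Aᵀ * H = H * Ab := by
    have h3 := congrArg Matrix.transpose hHA
    simp only [transpose_mul, transpose_transpose, hQsymm] at h3
    rw [hAb]
    simp only [Matrix.mul_assoc] at h3 ⊢
    exact h3
  have hHAb : Hᵀ * A = Abᵀ * Hᵀ := by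
    have h4 := congrArg Matrix.transpose hAH
    simp only [transpose_mul, transpose_transpose] at h4
    exact h4
  have hAH' : ∀ {k : Type} [Fintype k] (X : Matrix (Fin r) k ℝ),
      Aᵀ * (H * X) = H * (Ab * X) := by
    intro k _ X
    rw [← Matrix.mul_assoc, hAH, Matrix.mul_assoc]
  have hHAb' : ∀ {k : Type} [Fintype k] (X : Matrix (Fin n) k ℝ),
      Hᵀ * (A * X) = Abᵀ * (Hᵀ * X) := by
    intro k _ X
    rw [← Matrix.mul_assoc, hHAb, Matrix.mul_assoc]
  have hG : Hᵀ * (Aᵀ * Z + Z * A) * H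
      = (Hᵀ * H) * Ab * (Hᵀ * H) + (Hᵀ * H) * Abᵀ * (Hᵀ * H) := by
    rw [hfact]
    simp only [Matrix.mul_add, Matrix.add_mul, Matrix.mul_assoc]
    rw [hAH' (Hᵀ * H), hHAb' H]
  have collapse : ∀ X : Matrix (Fin r) (Fin r) ℝ,
      (Hᵀ * H)⁻¹ * ((Hᵀ * H) * X * (Hᵀ * H)) * (Hᵀ * H)⁻¹ = X := by
    intro X
    calc (Hᵀ * H)⁻¹ * ((Hᵀ * H) * X * (Hᵀ * H)) * (Hᵀ * H)⁻¹
        = ((Hᵀ * H)⁻¹ * (Hᵀ * H)) * (X * ((Hᵀ * H) * (Hᵀ * H)⁻¹)) := by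
          simp only [Matrix.mul_assoc]
      _ = X := by rw [hQinv, hQinv', Matrix.one_mul, Matrix.mul_one]
  have hS_eq : Ab + Abᵀ
      = (Hᵀ * H)⁻¹ * (Hᵀ * (Aᵀ * Z + Z * A) * H) * (Hᵀ * H)⁻¹ := by
    rw [hG, Matrix.mul_add, Matrix.add_mul, collapse, collapse]
  have hSpsd : (Ab + Abᵀ).PosSemidef := by
    have hGpsd : (Hᵀ * (Aᵀ * Z + Z * A) * H).PosSemidef := by
      have := hHe.conjTranspose_mul_mul_same H
      rwa [conjTranspose_eq_transpose_of_trivial] at this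
    have hfin := hGpsd.mul_mul_conjTranspose_same (Hᵀ * H)⁻¹
    rw [conjTranspose_eq_transpose_of_trivial, hQsymm] at hfin
    rwa [← hS_eq] at hfin
  -- complexification helpers
  have cmul : ∀ {p q s : ℕ} (M : Matrix (Fin p) (Fin q) ℝ) (N : Matrix (Fin q) (Fin s) ℝ),
      (M * N).map Complex.ofReal = M.map Complex.ofReal * N.map Complex.ofReal := by
    intro p q s M N
    ext i j
    simp [Matrix.mul_apply, Matrix.map_apply]
  -- eigenvalue of the complexified compressed matrix
  obtain ⟨μ, hμ⟩ := Module.End.exists_eigenvalue ((Ab.map Complex.ofReal).mulVecLin)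
  obtain ⟨w, hw⟩ := hμ.exists_hasEigenvector
  have hwne : w ≠ 0 := hw.right
  have heig : (Ab.map Complex.ofReal) *ᵥ w = μ • w := by
    have := hw.apply_eq_smul
    simpa [Matrix.mulVecLin_apply] using this
  -- the complexified S is PSD
  obtain ⟨C, hC⟩ : ∃ C : Matrix (Fin r) (Fin r) ℝ, Ab + Abᵀ = Cᴴ * C := by
    open MatrixOrder in
    obtain ⟨C, hC⟩ := CStarAlgebra.nonneg_iff_eq_star_mul_self.mp hSpsd.nonneg
    exact ⟨C, by rw [hC, star_eq_conjTranspose]⟩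
  have hCT : (C.map Complex.ofReal)ᴴ = (C.map Complex.ofReal)ᵀ := by
    ext i j
    simp [Matrix.conjTranspose_apply, Matrix.map_apply, Complex.conj_ofReal]
  have hScPsd : ((Ab + Abᵀ).map Complex.ofReal).PosSemidef := by
    rw [hC, conjTranspose_eq_transpose_of_trivial, cmul, transpose_map]
    have := posSemidef_conjTranspose_mul_self (C.map Complex.ofReal)
    rwa [hCT] at this
  -- quadratic form computation
  set t : ℂ := star w ⬝ᵥ w with ht
  have hAcH : ((Ab.map Complex.ofReal))ᴴ = (Ab.map Complex.ofReal)ᵀ := by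
    ext i j
    simp [Matrix.conjTranspose_apply, Matrix.map_apply, Complex.conj_ofReal]
  have hmap_add : (Ab + Abᵀ).map Complex.ofReal
      = Ab.map Complex.ofReal + (Ab.map Complex.ofReal)ᵀ := by
    ext i j
    simp [Matrix.map_apply, Matrix.add_apply, Matrix.transpose_apply]
  have hstar_mv : (Ab.map Complex.ofReal) *ᵥ star w = star ((Ab.map Complex.ofReal) *ᵥ w) := by
    rw [star_mulVec, hAcH, vecMul_transpose]
  have hform : star w ⬝ᵥ ((Ab + Abᵀ).map Complex.ofReal) *ᵥ w = (μ + star μ) * t := by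
    rw [hmap_add, add_mulVec, dotProduct_add, heig]
    have e1 : star w ⬝ᵥ (μ • w) = μ * t := by
      rw [dotProduct_smul, smul_eq_mul]
    have e2 : star w ⬝ᵥ ((Ab.map Complex.ofReal)ᵀ *ᵥ w) = star μ * t := by
      rw [dotProduct_mulVec, vecMul_transpose, hstar_mv, heig, star_smul,
        smul_dotProduct, smul_eq_mul]
    rw [e1, e2, add_mul]
  have hq := hScPsd.dotProduct_mulVec_nonneg w
  rw [hform] at hq
  -- t is a positive real
  have ht0 : 0 ≤ t := dotProduct_star_self_nonneg w
  have htne : t ≠ 0 := fun h => hwne (dotProduct_star_self_eq_zero.mp h)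
  have htim : t.im = 0 := by
    have := (Complex.le_def.mp ht0).2
    simpa using this.symm
  have htre : 0 < t.re := by
    have h1 : 0 ≤ t.re := by
      have := (Complex.le_def.mp ht0).1
      simpa using this
    rcases h1.lt_or_eq with h | h
    · exact h
    · exfalso
      exact htne (Complex.ext (by simp [← h]) (by simp [htim]))
  -- conclude Re μ ≥ 0
  have hmu : 0 ≤ μ.re := by
    have hsum : μ + star μ = ((2 * μ.re : ℝ) : ℂ) := Complex.add_conj μ
    rw [hsum] at hq
    have hre := (Complex.le_def.mp hq).1
    simp [Complex.mul_re, htim] at hre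
    nlinarith
  -- the eigenvector
  refine ⟨μ, hmu, (H.map Complex.ofReal) *ᵥ w, ?_, ?_, ?_⟩
  · intro h
    apply hwne
    have hQw : ((Hᵀ * H).map Complex.ofReal) *ᵥ w = 0 := by
      rw [cmul, ← mulVec_mulVec, h, mulVec_zero]
    have h1 : (((Hᵀ * H)⁻¹ * (Hᵀ * H)).map Complex.ofReal) *ᵥ w = w := by
      rw [hQinv, Matrix.map_one Complex.ofReal Complex.ofReal_zero Complex.ofReal_one,
        one_mulVec]
    rw [cmul, ← mulVec_mulVec, hQw, mulVec_zero] at h1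
    exact h1.symm
  · rw [mulVec_mulVec, ← cmul, hAH, cmul, ← mulVec_mulVec, heig, mulVec_smul]
  · rw [mulVec_mulVec, ← cmul, hBH,
      show ((0 : Matrix (Fin m₂) (Fin r) ℝ).map Complex.ofReal)
        = 0 from by ext i j; simp, zero_mulVec]
end

section
/- (If direction) Suppose there exist λ ∈ ℂ with Re(λ) ≥ 0 and η ∈ ℂ^n \ {0} with Aᵀη = λη and B_2ᵀη = 0. Then Z := η η̄ᵀ + η̄ ηᵀ is a real symmetric positive semidefinite matrix satisfying AᵀZ + ZAᵀᵀ = (λ + λ̄) Z ⪰ 0 and B_2ᵀZ = 0; moreover Z ≠ 0. -/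
open Matrix ComplexOrder

lemma vecMulVec_star_posSemidef {n : ℕ} (v : Fin n → ℂ) :
    (Matrix.vecMulVec v (star v)).PosSemidef := by
  have : Matrix.vecMulVec v (star v)
      = Matrix.replicateCol (Fin 1) v * (Matrix.replicateCol (Fin 1) v)ᴴ := by
    ext i j
    simp [Matrix.vecMulVec_apply, Matrix.mul_apply, Matrix.replicateCol_apply,
      Matrix.conjTranspose_apply]
  rw [this]
  exact Matrix.posSemidef_self_mul_conjTranspose _

theorem stmt_9 (n m₂ : ℕ) (A : Matrix (Fin n) (Fin n) ℝ)
    (B₂ : Matrix (Fin n) (Fin m₂) ℝ)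
    (lam : ℂ) (hlam : 0 ≤ lam.re)
    (η : Fin n → ℂ) (hη : η ≠ 0)
    (heig : (Aᵀ.map Complex.ofReal).mulVec η = lam • η)
    (hB : (B₂ᵀ.map Complex.ofReal).mulVec η = 0) :
    ∀ Z : Matrix (Fin n) (Fin n) ℂ,
      Z = Matrix.vecMulVec η (star η) + Matrix.vecMulVec (star η) η →
      (∀ i j, (Z i j).im = 0) ∧ Z.PosSemidef ∧
      (Aᵀ.map Complex.ofReal) * Z + Z * (A.map Complex.ofReal) = (lam + starRingEnd ℂ lam) • Z ∧
      ((Aᵀ.map Complex.ofReal) * Z + Z * (A.map Complex.ofReal)).PosSemidef ∧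
      (B₂ᵀ.map Complex.ofReal) * Z = 0 ∧ Z ≠ 0 := by
  intro Z hZ
  subst hZ
  -- eigen equations componentwise
  have heig' : ∀ i, ∑ k, (A k i : ℂ) * η k = lam * η i := by
    intro i
    have := congrFun heig i
    simpa [Matrix.mulVec, dotProduct, Matrix.map_apply] using this
  have heigc : ∀ i, ∑ k, (A k i : ℂ) * (starRingEnd ℂ) (η k)
      = (starRingEnd ℂ) lam * (starRingEnd ℂ) (η i) := by
    intro i
    have := congrArg (starRingEnd ℂ) (heig' i)
    simpa [map_sum, _root_.map_mul, Complex.conj_ofReal] using this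
  have hB' : ∀ i, ∑ k, (B₂ k i : ℂ) * η k = 0 := by
    intro i
    have := congrFun hB i
    simpa [Matrix.mulVec, dotProduct, Matrix.map_apply] using this
  have hBc : ∀ i, ∑ k, (B₂ k i : ℂ) * (starRingEnd ℂ) (η k) = 0 := by
    intro i
    have := congrArg (starRingEnd ℂ) (hB' i)
    simpa [map_sum, _root_.map_mul, Complex.conj_ofReal] using this
  have hZpsd : (Matrix.vecMulVec η (star η) + Matrix.vecMulVec (star η) η).PosSemidef := by
    have h1 := vecMulVec_star_posSemidef η
    have h2 := vecMulVec_star_posSemidef (star η)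
    rw [star_star] at h2
    exact h1.add h2
  have heq : (Aᵀ.map Complex.ofReal) * (Matrix.vecMulVec η (star η) + Matrix.vecMulVec (star η) η)
      + (Matrix.vecMulVec η (star η) + Matrix.vecMulVec (star η) η) * (A.map Complex.ofReal)
      = (lam + starRingEnd ℂ lam) • (Matrix.vecMulVec η (star η) + Matrix.vecMulVec (star η) η) := by
    ext i j
    have e1 : ∑ k, (A k i : ℂ) * (η k * (starRingEnd ℂ) (η j) + (starRingEnd ℂ) (η k) * η j)
        = (∑ k, (A k i : ℂ) * η k) * (starRingEnd ℂ) (η j)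
          + (∑ k, (A k i : ℂ) * (starRingEnd ℂ) (η k)) * η j := by
      rw [Finset.sum_mul, Finset.sum_mul, ← Finset.sum_add_distrib]
      exact Finset.sum_congr rfl fun k _ => by ring
    have e2 : ∑ k, (η i * (starRingEnd ℂ) (η k) + (starRingEnd ℂ) (η i) * η k) * (A k j : ℂ)
        = η i * (∑ k, (A k j : ℂ) * (starRingEnd ℂ) (η k))
          + (starRingEnd ℂ) (η i) * (∑ k, (A k j : ℂ) * η k) := by
      rw [Finset.mul_sum, Finset.mul_sum, ← Finset.sum_add_distrib]
      exact Finset.sum_congr rfl fun k _ => by ring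
    simp only [Matrix.add_apply, Matrix.mul_apply, Matrix.smul_apply, Matrix.map_apply,
      Matrix.transpose_apply, Matrix.vecMulVec_apply, Pi.star_apply, Complex.star_def,
      smul_eq_mul]
    rw [e1, e2, heig' i, heigc i, heig' j, heigc j]
    ring
  refine ⟨?_, ?_, ?_, ?_, ?_, ?_⟩
  · intro i j
    simp [Matrix.vecMulVec_apply, Complex.add_im, Complex.mul_im, Pi.star_apply,
      Complex.star_def]
    ring
  · exact hZpsd
  · exact heq
  · have hc : (0 : ℂ) ≤ lam + starRingEnd ℂ lam := by
      rw [Complex.le_def]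
      constructor
      · simpa using by linarith
      · simp
    rw [heq]
    refine ⟨?_, ?_⟩
    · have hcr : starRingEnd ℂ (lam + starRingEnd ℂ lam) = lam + starRingEnd ℂ lam := by
        simp [add_comm]
      unfold Matrix.IsHermitian
      rw [Matrix.conjTranspose_smul, hZpsd.1.eq, Complex.star_def, hcr]
    · intro x
      convert mul_nonneg hc (hZpsd.2 x) using 1
      rw [Finsupp.mul_sum]
      refine Finsupp.sum_congr fun i _ => ?_
      rw [Finsupp.mul_sum]
      refine Finsupp.sum_congr fun j _ => ?_
      simp only [Matrix.smul_apply, smul_eq_mul]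
      ring
  · ext i j
    simp only [Matrix.mul_apply, Matrix.add_apply, Matrix.map_apply, Matrix.transpose_apply,
      Matrix.vecMulVec_apply, Pi.star_apply, Complex.star_def, Matrix.zero_apply]
    calc ∑ k, (B₂ k i : ℂ) * (η k * (starRingEnd ℂ) (η j) + (starRingEnd ℂ) (η k) * η j)
        = (∑ k, (B₂ k i : ℂ) * η k) * (starRingEnd ℂ) (η j)
          + (∑ k, (B₂ k i : ℂ) * (starRingEnd ℂ) (η k)) * η j := by
          rw [Finset.sum_mul, Finset.sum_mul, ← Finset.sum_add_distrib]
          apply Finset.sum_congr rfl; intros; ring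
      _ = 0 := by rw [hB' i, hBc i]; ring
  · intro hZ0
    obtain ⟨i, hi⟩ := Function.ne_iff.mp hη
    have := congrFun (congrFun hZ0 i) i
    simp only [Matrix.add_apply, Matrix.vecMulVec_apply, Pi.star_apply, Complex.star_def,
      Matrix.zero_apply] at this
    rw [Complex.mul_conj, mul_comm, Complex.mul_conj] at this
    have : (2 : ℂ) * (Complex.normSq (η i) : ℂ) = 0 := by rw [two_mul]; exact_mod_cast this
    simp [Complex.normSq_eq_zero] at this
    · exact hi (by simpa using this)
end

section
/- Suppose there exists λ ∈ ℂ with Re(λ) ≤ 0 such that rank of the (n+p_1)×(n+m_2) block matrix [[A − λI_n, B_2],[C_1, D_12]] is less than n + m_2, and that the stacked matrix [B_2; D_12] has full column rank. Then there exist a nonzero positive semidefinite X ∈ S^n and Y ∈ ℝ^{m_2×n} such that C_1 X + D_12 Y = 0 and −(AX + B_2Y) − (AX + B_2Y)ᵀ is positive semidefinite. -/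
open Matrix

private lemma sum_re_aux {κ : Type*} (s : Finset κ) (c : κ → ℝ) (w : κ → ℂ) (u : ℂ) :
    ∑ k ∈ s, c k * (2 * (w k * u).re) = 2 * ((∑ k ∈ s, (c k : ℂ) * w k) * u).re := by
  rw [Finset.sum_mul, Complex.re_sum, Finset.mul_sum]
  refine Finset.sum_congr rfl fun k _ => ?_
  rw [mul_assoc ((c k : ℂ)), Complex.re_ofReal_mul]
  ring

private lemma mul_entry_aux {q r N : ℕ} (P : Matrix (Fin q) (Fin r) ℝ) (w : Fin r → ℂ)
    (u : Fin N → ℂ) (i : Fin q) (j : Fin N) :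
    (P * Matrix.of (fun k j => 2 * (w k * (starRingEnd ℂ) (u j)).re)) i j
      = 2 * (((P.map Complex.ofReal) *ᵥ w) i * (starRingEnd ℂ) (u j)).re := by
  rw [Matrix.mul_apply]
  simpa [Matrix.mulVec, dotProduct, Matrix.map_apply] using
    sum_re_aux Finset.univ (fun k => P i k) w ((starRingEnd ℂ) (u j))

private lemma outer_psd {N : ℕ} (η : Fin N → ℂ) :
    (Matrix.of (fun i j => 2 * (η i * (starRingEnd ℂ) (η j)).re) :
      Matrix (Fin N) (Fin N) ℝ).PosSemidef := by
  refine Matrix.posSemidef_iff_dotProduct_mulVec.mpr ⟨?_, ?_⟩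
  · ext i j
    simp only [Matrix.conjTranspose_apply, Matrix.of_apply, star_trivial]
    simp [Complex.mul_re, Complex.conj_re, Complex.conj_im]
    ring
  · intro x
    simp only [star_trivial]
    set s : ℂ := ∑ j, (x j : ℂ) * η j with hs
    have hconj : ∑ j, (x j : ℂ) * (starRingEnd ℂ) (η j) = (starRingEnd ℂ) s := by
      rw [hs, map_sum]
      exact Finset.sum_congr rfl fun j _ => by simp
    have hmv : ∀ i, ((Matrix.of (fun i j => 2 * (η i * (starRingEnd ℂ) (η j)).re) :
        Matrix (Fin N) (Fin N) ℝ) *ᵥ x) i = 2 * (η i * (starRingEnd ℂ) s).re := by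
      intro i
      simp only [Matrix.mulVec, dotProduct, Matrix.of_apply]
      calc ∑ j, 2 * (η i * (starRingEnd ℂ) (η j)).re * x j
          = ∑ j, x j * (2 * ((starRingEnd ℂ) (η j) * η i).re) := by
            refine Finset.sum_congr rfl fun j _ => ?_
            rw [mul_comm (η i)]; ring
        _ = 2 * ((∑ j, (x j : ℂ) * (starRingEnd ℂ) (η j)) * η i).re := sum_re_aux _ _ _ _
        _ = 2 * (η i * (starRingEnd ℂ) s).re := by rw [hconj, mul_comm ((starRingEnd ℂ) s)]
    have : x ⬝ᵥ ((Matrix.of (fun i j => 2 * (η i * (starRingEnd ℂ) (η j)).re) :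
        Matrix (Fin N) (Fin N) ℝ) *ᵥ x) = 2 * Complex.normSq s := by
      simp only [dotProduct]
      calc ∑ i, x i * ((Matrix.of (fun i j => 2 * (η i * (starRingEnd ℂ) (η j)).re) :
          Matrix (Fin N) (Fin N) ℝ) *ᵥ x) i
          = ∑ i, x i * (2 * (η i * (starRingEnd ℂ) s).re) := by
            exact Finset.sum_congr rfl fun i _ => by rw [hmv i]
        _ = 2 * ((∑ i, (x i : ℂ) * η i) * (starRingEnd ℂ) s).re := sum_re_aux _ _ _ _
        _ = 2 * Complex.normSq s := by rw [← hs, Complex.mul_conj]; simp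
    rw [this]
    have := Complex.normSq_nonneg s
    linarith

private lemma psd_smul_aux {N : ℕ} {M : Matrix (Fin N) (Fin N) ℝ} (hM : M.PosSemidef)
    {c : ℝ} (hc : 0 ≤ c) : (c • M).PosSemidef := by
  refine Matrix.posSemidef_iff_dotProduct_mulVec.mpr ⟨?_, fun x => ?_⟩
  · ext i j
    have h := congrFun (congrFun hM.1 i) j
    simp only [Matrix.conjTranspose_apply, star_trivial] at h ⊢
    simp [h]
  · rw [Matrix.smul_mulVec, dotProduct_smul, star_trivial]
    exact mul_nonneg hc (by simpa using hM.dotProduct_mulVec_nonneg x)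

private lemma realpart_ker_aux {q r : ℕ} (P : Matrix (Fin q) (Fin r) ℝ) (w : Fin r → ℂ)
    (h : (P.map Complex.ofReal) *ᵥ w = 0) :
    P *ᵥ (fun k => (w k).re) = 0 ∧ P *ᵥ (fun k => (w k).im) = 0 := by
  constructor <;> funext i
  · have h1 := congrArg Complex.re (congrFun h i)
    simp only [Matrix.mulVec, dotProduct, Matrix.map_apply, Pi.zero_apply,
      Complex.zero_re, Complex.re_sum] at h1
    simpa [Matrix.mulVec, dotProduct, Complex.re_ofReal_mul] using h1
  · have h1 := congrArg Complex.im (congrFun h i)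
    simp only [Matrix.mulVec, dotProduct, Matrix.map_apply, Pi.zero_apply,
      Complex.zero_im, Complex.im_sum] at h1
    simpa [Matrix.mulVec, dotProduct, Complex.im_ofReal_mul] using h1

theorem stmt_10 (n m₂ p₁ : ℕ) (A : Matrix (Fin n) (Fin n) ℝ)
    (B₂ : Matrix (Fin n) (Fin m₂) ℝ) (C₁ : Matrix (Fin p₁) (Fin n) ℝ)
    (D₁₂ : Matrix (Fin p₁) (Fin m₂) ℝ)
    (hzero : ∃ lam : ℂ, lam.re ≤ 0 ∧
      (Matrix.fromBlocks (A.map Complex.ofReal - lam • 1) (B₂.map Complex.ofReal)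
        (C₁.map Complex.ofReal) (D₁₂.map Complex.ofReal)).rank < n + m₂)
    (hfull : (Matrix.fromRows B₂ D₁₂).rank = m₂) :
    ∃ (X : Matrix (Fin n) (Fin n) ℝ) (Y : Matrix (Fin m₂) (Fin n) ℝ),
      X ≠ 0 ∧ X.PosSemidef ∧ C₁ * X + D₁₂ * Y = 0 ∧
      ((-(A * X + B₂ * Y)) - (A * X + B₂ * Y)ᵀ).PosSemidef := by
  obtain ⟨lam, hlam, hrank⟩ := hzero
  set M : Matrix (Fin n ⊕ Fin p₁) (Fin n ⊕ Fin m₂) ℂ :=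
    Matrix.fromBlocks (A.map Complex.ofReal - lam • 1) (B₂.map Complex.ofReal)
      (C₁.map Complex.ofReal) (D₁₂.map Complex.ofReal) with hM
  -- nontrivial kernel
  have hfr := LinearMap.finrank_range_add_finrank_ker M.mulVecLin
  have hcard : Module.finrank ℂ ((Fin n ⊕ Fin m₂) → ℂ) = n + m₂ := by
    simp [Module.finrank_fintype_fun_eq_card]
  have hrank' : Module.finrank ℂ (LinearMap.range M.mulVecLin) < n + m₂ := hrank
  have hker : LinearMap.ker M.mulVecLin ≠ ⊥ := by
    intro h
    rw [h, finrank_bot, hcard] at hfr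
    omega
  obtain ⟨v, hv_mem, hv_ne⟩ := (Submodule.ne_bot_iff _).mp hker
  set η : Fin n → ℂ := fun i => v (Sum.inl i) with hη_def
  set ξ : Fin m₂ → ℂ := fun k => v (Sum.inr k) with hξ_def
  have hv_eq : v = Sum.elim η ξ := by funext x; cases x <;> rfl
  have h0 : M *ᵥ Sum.elim η ξ = 0 := by
    rw [← hv_eq]
    simpa [Matrix.mulVecLin_apply] using (LinearMap.mem_ker.mp hv_mem)
  rw [hM, Matrix.fromBlocks_mulVec] at h0
  simp only [Sum.elim_comp_inl, Sum.elim_comp_inr] at h0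
  have h1 : ∀ i, ((A.map Complex.ofReal) *ᵥ η) i + ((B₂.map Complex.ofReal) *ᵥ ξ) i
      = lam * η i := by
    intro i
    have h1' := congrFun h0 (Sum.inl i)
    simp only [Sum.elim_inl, Sum.elim_inr, Pi.add_apply, Matrix.sub_mulVec,
      Matrix.smul_mulVec, Matrix.one_mulVec, Pi.sub_apply, Pi.smul_apply, smul_eq_mul,
      Pi.zero_apply, Function.comp] at h1'
    linear_combination h1'
  have h2 : ∀ i, ((C₁.map Complex.ofReal) *ᵥ η) i + ((D₁₂.map Complex.ofReal) *ᵥ ξ) i = 0 := by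
    intro i
    have h2' := congrFun h0 (Sum.inr i)
    simpa using h2'
  -- η ≠ 0
  have hη_ne : η ≠ 0 := by
    intro hη0
    have hB : (B₂.map Complex.ofReal) *ᵥ ξ = 0 := by
      funext i
      have := h1 i
      rw [hη0] at this
      simpa using this
    have hD : (D₁₂.map Complex.ofReal) *ᵥ ξ = 0 := by
      funext i
      have := h2 i
      rw [hη0] at this
      simpa using this
    obtain ⟨hBre, hBim⟩ := realpart_ker_aux B₂ ξ hB
    obtain ⟨hDre, hDim⟩ := realpart_ker_aux D₁₂ ξ hD
    have hfr2 := LinearMap.finrank_range_add_finrank_ker (Matrix.fromRows B₂ D₁₂).mulVecLin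
    have hcard2 : Module.finrank ℝ ((Fin m₂) → ℝ) = m₂ := by
      simp [Module.finrank_fintype_fun_eq_card]
    have hrange2 : Module.finrank ℝ (LinearMap.range (Matrix.fromRows B₂ D₁₂).mulVecLin) = m₂ :=
      hfull
    have hker2 : LinearMap.ker (Matrix.fromRows B₂ D₁₂).mulVecLin = ⊥ := by
      rw [hcard2, hrange2] at hfr2
      exact Submodule.finrank_eq_zero.mp (by omega)
    have hinj := LinearMap.ker_eq_bot.mp hker2
    have hz : ∀ g : Fin m₂ → ℝ, (Matrix.fromRows B₂ D₁₂) *ᵥ g = 0 → g = 0 := by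
      intro g hg
      have : (Matrix.fromRows B₂ D₁₂).mulVecLin g = (Matrix.fromRows B₂ D₁₂).mulVecLin 0 := by
        simpa [Matrix.mulVecLin_apply] using hg
      exact hinj this
    have hre0 : (fun k => (ξ k).re) = 0 := by
      apply hz
      rw [Matrix.fromRows_mulVec, hBre, hDre]
      funext x; cases x <;> rfl
    have him0 : (fun k => (ξ k).im) = 0 := by
      apply hz
      rw [Matrix.fromRows_mulVec, hBim, hDim]
      funext x; cases x <;> rfl
    have hξ0 : ξ = 0 := by
      funext k
      exact Complex.ext (congrFun hre0 k) (congrFun him0 k)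
    apply hv_ne
    rw [hv_eq, hη0, hξ0]
    funext x; cases x <;> rfl
  -- construction
  refine ⟨Matrix.of (fun i j => 2 * (η i * (starRingEnd ℂ) (η j)).re),
          Matrix.of (fun i j => 2 * (ξ i * (starRingEnd ℂ) (η j)).re), ?_, outer_psd η, ?_, ?_⟩
  · -- X ≠ 0
    obtain ⟨j, hj⟩ := Function.ne_iff.mp hη_ne
    intro hX0
    have h := congrFun (congrFun hX0 j) j
    simp only [Matrix.of_apply, Matrix.zero_apply, Complex.mul_conj, Complex.ofReal_re] at h
    have h2 : Complex.normSq (η j) = 0 := by linarith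
    exact hj (Complex.normSq_eq_zero.mp h2)
  · -- C₁X + D₁₂Y = 0
    ext i j
    rw [Matrix.add_apply, mul_entry_aux, mul_entry_aux, Matrix.zero_apply]
    have := h2 i
    have hb : ((D₁₂.map Complex.ofReal) *ᵥ ξ) i = -(((C₁.map Complex.ofReal) *ᵥ η) i) := by
      linear_combination this
    rw [hb]
    simp only [neg_mul, Complex.neg_re]
    ring
  · -- final PSD
    have hAX : ∀ i j, (A * Matrix.of (fun i j => 2 * (η i * (starRingEnd ℂ) (η j)).re)
        + B₂ * Matrix.of (fun i j => 2 * (ξ i * (starRingEnd ℂ) (η j)).re)) i j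
        = 2 * (lam * (η i * (starRingEnd ℂ) (η j))).re := by
      intro i j
      rw [Matrix.add_apply, mul_entry_aux, mul_entry_aux]
      set u : ℂ := (starRingEnd ℂ) (η j) with hu
      set a : ℂ := ((A.map Complex.ofReal) *ᵥ η) i with ha
      have hb : ((B₂.map Complex.ofReal) *ᵥ ξ) i = lam * η i - a := by
        linear_combination h1 i
      rw [hb]
      have hc : a * u + (lam * η i - a) * u = lam * (η i * u) := by ring
      calc 2 * (a * u).re + 2 * ((lam * η i - a) * u).re
          = 2 * ((a * u + (lam * η i - a) * u).re) := by rw [Complex.add_re]; ring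
        _ = 2 * (lam * (η i * u)).re := by rw [hc]
    have heq : (-(A * Matrix.of (fun i j => 2 * (η i * (starRingEnd ℂ) (η j)).re)
        + B₂ * Matrix.of (fun i j => 2 * (ξ i * (starRingEnd ℂ) (η j)).re))
        - (A * Matrix.of (fun i j => 2 * (η i * (starRingEnd ℂ) (η j)).re)
        + B₂ * Matrix.of (fun i j => 2 * (ξ i * (starRingEnd ℂ) (η j)).re))ᵀ)
        = (-(2 * lam.re)) • Matrix.of (fun i j : Fin n => 2 * (η i * (starRingEnd ℂ) (η j)).re) := by
      ext i j
      rw [Matrix.sub_apply, Matrix.neg_apply, Matrix.transpose_apply, hAX i j, hAX j i,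
        Matrix.smul_apply, Matrix.of_apply]
      simp only [Complex.mul_re, Complex.mul_im, Complex.conj_re, Complex.conj_im,
        smul_eq_mul]
      ring
    rw [heq]
    exact psd_smul_aux (outer_psd η) (by linarith)
end

section
/- Suppose X ∈ S^n_+, Y ∈ ℝ^{m_2×n} satisfy C_1X + D_12Y = 0 and −He(AX + B_2Y) ⪰ 0, and that X = HHᵀ, Y = RHᵀ for some full column rank H ∈ ℝ^{n×r} and some R ∈ ℝ^{m_2×r} with r ≥ 1. Then there exists λ ∈ ℂ with Re(λ) ≤ 0 such that rank [[A − λI_n, B_2],[C_1, D_12]] < n + m_2 (i.e., the system has a stable invariant zero). -/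
open Matrix

lemma aux_inj {n r : ℕ} (H : Matrix (Fin n) (Fin r) ℝ) (hfull : H.rank = r) :
    Function.Injective H.mulVec := by
  have h := LinearMap.finrank_range_add_finrank_ker H.mulVecLin
  rw [Module.finrank_fintype_fun_eq_card, Fintype.card_fin] at h
  have hrk : Module.finrank ℝ (LinearMap.range H.mulVecLin) = r := hfull
  rw [hrk] at h
  have hker : LinearMap.ker H.mulVecLin = ⊥ := by
    rw [Submodule.finrank_eq_zero.symm]
    omega
  exact fun x y hxy => by
    have := LinearMap.ker_eq_bot.mp hker
    exact this hxy

lemma aux_mul_eq_zero {n r k : ℕ} (H : Matrix (Fin n) (Fin r) ℝ)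
    (hinj : Function.Injective H.mulVec)
    {N : Matrix (Fin r) (Fin k) ℝ} (h : H * N = 0) : N = 0 := by
  ext i j
  have : H *ᵥ (fun i => N i j) = H *ᵥ 0 := by
    funext a
    simp only [Matrix.mulVec, dotProduct, Pi.zero_apply, mul_zero, Finset.sum_const_zero]
    have := congrFun (congrFun h a) j
    simpa [Matrix.mul_apply] using this
  have := hinj this
  simpa using congrFun this i

lemma re_map_mulVec {k l : ℕ} (M : Matrix (Fin k) (Fin l) ℝ) (w : Fin l → ℂ) (i : Fin k) :
    ((M.map Complex.ofReal *ᵥ w) i).re = (M *ᵥ fun j => (w j).re) i := by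
  simp [Matrix.mulVec, dotProduct, Complex.re_sum, Complex.mul_re]

lemma im_map_mulVec {k l : ℕ} (M : Matrix (Fin k) (Fin l) ℝ) (w : Fin l → ℂ) (i : Fin k) :
    ((M.map Complex.ofReal *ᵥ w) i).im = (M *ᵥ fun j => (w j).im) i := by
  simp [Matrix.mulVec, dotProduct, Complex.im_sum, Complex.mul_im]

lemma aux_psd_zero {n : ℕ} {M : Matrix (Fin n) (Fin n) ℝ} (hM : M.PosSemidef)
    {x : Fin n → ℝ} (hx : x ⬝ᵥ (M *ᵥ x) = 0) : M *ᵥ x = 0 := by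
  exact (hM.dotProduct_mulVec_zero_iff x).mp (by simpa using hx)

lemma aux_isUnit {n r : ℕ} (H : Matrix (Fin n) (Fin r) ℝ)
    (hinj : Function.Injective H.mulVec) : IsUnit (Hᵀ * H).det := by
  rw [← Matrix.isUnit_iff_isUnit_det, ← Matrix.mulVec_injective_iff_isUnit]
  intro x y hxy
  have h0 : (Hᵀ * H) *ᵥ (x - y) = 0 := by
    rw [Matrix.mulVec_sub, hxy, sub_self]
  have h1 : (H *ᵥ (x - y)) ⬝ᵥ (H *ᵥ (x - y)) = 0 := by
    rw [show (H *ᵥ (x-y)) ⬝ᵥ (H *ᵥ (x-y)) = (x-y) ⬝ᵥ ((Hᵀ * H) *ᵥ (x - y)) by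
      conv_rhs => rw [← Matrix.mulVec_mulVec, Matrix.dotProduct_mulVec, Matrix.vecMul_transpose]]
    rw [h0, dotProduct_zero]
  have h2 : H *ᵥ (x - y) = 0 := dotProduct_self_eq_zero.mp h1
  have := hinj (show H *ᵥ (x-y) = H *ᵥ 0 by simpa using h2)
  exact sub_eq_zero.mp (by simpa using this)

lemma aux_ext_mulVec {k l : ℕ} {M N : Matrix (Fin k) (Fin l) ℝ}
    (h : ∀ x, M *ᵥ x = N *ᵥ x) : M = N := by
  ext i j
  have := congrFun (h (Pi.single j 1)) i
  simpa using this

lemma aux_map_mul {k l m : ℕ} (M : Matrix (Fin k) (Fin l) ℝ) (N : Matrix (Fin l) (Fin m) ℝ) :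
    (M * N).map Complex.ofReal = M.map Complex.ofReal * N.map Complex.ofReal := by
  ext i j
  simp [Matrix.mul_apply, Matrix.map_apply]

lemma aux_map_add {k l : ℕ} (M N : Matrix (Fin k) (Fin l) ℝ) :
    (M + N).map Complex.ofReal = M.map Complex.ofReal + N.map Complex.ofReal := by
  ext i j; simp [Matrix.map_apply]

lemma aux_map_neg {k l : ℕ} (M : Matrix (Fin k) (Fin l) ℝ) :
    (-M).map Complex.ofReal = -(M.map Complex.ofReal) := by
  ext i j; simp [Matrix.map_apply]

theorem stmt_11 (n m₂ p₁ r : ℕ) (A : Matrix (Fin n) (Fin n) ℝ)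
    (B₂ : Matrix (Fin n) (Fin m₂) ℝ) (C₁ : Matrix (Fin p₁) (Fin n) ℝ)
    (D₁₂ : Matrix (Fin p₁) (Fin m₂) ℝ)
    (X : Matrix (Fin n) (Fin n) ℝ) (Y : Matrix (Fin m₂) (Fin n) ℝ)
    (hX : X.PosSemidef)
    (heq : C₁ * X + D₁₂ * Y = 0)
    (hHe : ((-(A * X + B₂ * Y)) - (A * X + B₂ * Y)ᵀ).PosSemidef)
    (H : Matrix (Fin n) (Fin r) ℝ) (R : Matrix (Fin m₂) (Fin r) ℝ)
    (hXf : X = H * Hᵀ) (hYf : Y = R * Hᵀ) (hfull : H.rank = r) (hr : 1 ≤ r) :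
    ∃ lam : ℂ, lam.re ≤ 0 ∧
      (Matrix.fromBlocks (A.map Complex.ofReal - lam • 1) (B₂.map Complex.ofReal)
        (C₁.map Complex.ofReal) (D₁₂.map Complex.ofReal)).rank < n + m₂ := by
  classical
  have hinj : Function.Injective H.mulVec := aux_inj H hfull
  set G : Matrix (Fin n) (Fin r) ℝ := -(A * H + B₂ * R) with hGdef
  -- the Lyapunov-type matrix
  set S : Matrix (Fin n) (Fin n) ℝ := (-(A * X + B₂ * Y)) - (A * X + B₂ * Y)ᵀ with hSdef
  have hS : S = G * Hᵀ + H * Gᵀ := by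
    have h1 : A * X + B₂ * Y = -(G * Hᵀ) := by
      rw [hXf, hYf, hGdef]
      rw [Matrix.neg_mul, neg_neg, Matrix.add_mul, Matrix.mul_assoc, Matrix.mul_assoc]
    rw [hSdef, h1]
    rw [Matrix.transpose_neg, Matrix.transpose_mul, Matrix.transpose_transpose]
    abel
  -- kernel of Hᵀ is contained in kernel of Gᵀ
  have hC : ∀ x : Fin n → ℝ, Hᵀ *ᵥ x = 0 → Gᵀ *ᵥ x = 0 := by
    intro x hx
    have e1 : (G * Hᵀ) *ᵥ x = 0 := by
      rw [← Matrix.mulVec_mulVec, hx, Matrix.mulVec_zero]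
    have e2 : x ⬝ᵥ ((H * Gᵀ) *ᵥ x) = 0 := by
      rw [← Matrix.mulVec_mulVec, Matrix.dotProduct_mulVec]
      rw [show x ᵥ* H = Hᵀ *ᵥ x by rw [← Matrix.vecMul_transpose, Matrix.transpose_transpose]]
      rw [hx, zero_dotProduct]
    have hquad : x ⬝ᵥ (S *ᵥ x) = 0 := by
      rw [hS, Matrix.add_mulVec, e1, zero_add, e2]
    have hSx : S *ᵥ x = 0 := aux_psd_zero hHe hquad
    rw [hS, Matrix.add_mulVec, e1, zero_add, ← Matrix.mulVec_mulVec] at hSx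
    have := hinj (show H *ᵥ (Gᵀ *ᵥ x) = H *ᵥ 0 by simpa using hSx)
    simpa using this
  have hdet : IsUnit (Hᵀ * H).det := aux_isUnit H hinj
  set Ω : Matrix (Fin r) (Fin r) ℝ := (Hᵀ * H)⁻¹ * (Hᵀ * G) with hΩdef
  -- G = H * Ω
  have hGH : G = H * Ω := by
    have key : Gᵀ = Gᵀ * (H * ((Hᵀ * H)⁻¹ * Hᵀ)) := by
      apply aux_ext_mulVec
      intro x
      set q : Fin n → ℝ := x - H *ᵥ ((Hᵀ * H)⁻¹ *ᵥ (Hᵀ *ᵥ x)) with hq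
      have hHq : Hᵀ *ᵥ q = 0 := by
        rw [hq, Matrix.mulVec_sub, Matrix.mulVec_mulVec, Matrix.mulVec_mulVec,
          Matrix.mul_nonsing_inv _ hdet, Matrix.one_mulVec, sub_self]
      have := hC q hHq
      rw [hq, Matrix.mulVec_sub, sub_eq_zero] at this
      rw [this]
      simp [Matrix.mulVec_mulVec, Matrix.mul_assoc]
    have := congrArg Matrix.transpose key
    rw [Matrix.transpose_transpose, Matrix.transpose_mul] at this
    rw [this, hΩdef]
    simp [Matrix.transpose_mul, Matrix.transpose_nonsing_inv, Matrix.transpose_transpose,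
      Matrix.mul_assoc]
  -- quadratic form of Ω is nonnegative
  have hΩpos : ∀ z : Fin r → ℝ, 0 ≤ z ⬝ᵥ (Ω *ᵥ z) := by
    intro z
    -- Hᵀ mulVec is surjective
    obtain ⟨x, hx⟩ : ∃ x, Hᵀ *ᵥ x = z := by
      have hrk : Hᵀ.rank = r := by rw [Matrix.rank_transpose]; exact hfull
      have hrange : LinearMap.range Hᵀ.mulVecLin = ⊤ := by
        apply Submodule.eq_top_of_finrank_eq
        rw [Module.finrank_fintype_fun_eq_card, Fintype.card_fin]
        exact hrk
      exact LinearMap.range_eq_top.mp hrange z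
    have hnn : (0:ℝ) ≤ x ⬝ᵥ (S *ᵥ x) := by
      have := hHe.dotProduct_mulVec_nonneg x
      simpa using this
    have hcalc : x ⬝ᵥ (S *ᵥ x) = z ⬝ᵥ (Ω *ᵥ z) + z ⬝ᵥ (Ω *ᵥ z) := by
      rw [hS, hGH, Matrix.add_mulVec]
      rw [dotProduct_add]
      congr 1
      · rw [← Matrix.mulVec_mulVec, ← Matrix.mulVec_mulVec, Matrix.dotProduct_mulVec]
        rw [show x ᵥ* H = Hᵀ *ᵥ x by rw [← Matrix.vecMul_transpose, Matrix.transpose_transpose]]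
        rw [hx]
      · rw [Matrix.transpose_mul, ← Matrix.mulVec_mulVec, ← Matrix.mulVec_mulVec,
          Matrix.dotProduct_mulVec]
        rw [show x ᵥ* H = Hᵀ *ᵥ x by rw [← Matrix.vecMul_transpose, Matrix.transpose_transpose]]
        rw [hx, Matrix.dotProduct_mulVec, Matrix.vecMul_transpose, dotProduct_comm]
    linarith [hnn, hcalc ▸ hnn]
  -- C₁ H + D₁₂ R = 0
  have hCc : C₁ * H + D₁₂ * R = 0 := by
    have h1 : (C₁ * H + D₁₂ * R) * Hᵀ = 0 := by
      rw [Matrix.add_mul, Matrix.mul_assoc, Matrix.mul_assoc, ← hXf, ← hYf, heq]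
    have h2 : H * (C₁ * H + D₁₂ * R)ᵀ = 0 := by
      have := congrArg Matrix.transpose h1
      simpa [Matrix.transpose_mul] using this
    have h3 := aux_mul_eq_zero H hinj h2
    have := congrArg Matrix.transpose h3
    simpa using this
  have hreal : A * H + B₂ * R = -(H * Ω) := by
    have := hGH
    rw [hGdef] at this
    rw [neg_eq_iff_eq_neg] at this
    rw [this]
  -- eigenvalue of Ω over ℂ
  haveI : Nonempty (Fin r) := ⟨⟨0, hr⟩⟩
  obtain ⟨μ, hμ⟩ := Module.End.exists_eigenvalue ((Ω.map Complex.ofReal).mulVecLin)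
  obtain ⟨η, hη⟩ := hμ.exists_hasEigenvector
  have heig : (Ω.map Complex.ofReal) *ᵥ η = μ • η := hη.apply_eq_smul
  have hη0 : η ≠ 0 := hη.right
  set a : Fin r → ℝ := fun i => (η i).re with ha
  set b : Fin r → ℝ := fun i => (η i).im with hb
  have heigre : Ω *ᵥ a = μ.re • a - μ.im • b := by
    funext i
    have h2 : ((Ω.map Complex.ofReal *ᵥ η) i).re = (Ω *ᵥ a) i := re_map_mulVec Ω η i
    rw [heig] at h2
    rw [← h2]
    simp [Complex.mul_re, ha, hb]
  have heigim : Ω *ᵥ b = μ.im • a + μ.re • b := by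
    funext i
    have h2 : ((Ω.map Complex.ofReal *ᵥ η) i).im = (Ω *ᵥ b) i := im_map_mulVec Ω η i
    rw [heig] at h2
    rw [← h2]
    simp only [Pi.smul_apply, smul_eq_mul, Complex.mul_im, Pi.add_apply, ha, hb]
    ring
  -- positivity of the real part
  have hdsn : ∀ c : Fin r → ℝ, (0:ℝ) ≤ c ⬝ᵥ c := fun c =>
    Finset.sum_nonneg fun i _ => mul_self_nonneg _
  have hab : 0 < a ⬝ᵥ a + b ⬝ᵥ b := by
    rcases lt_or_eq_of_le (by
      have := hdsn a; have := hdsn b; linarith : (0:ℝ) ≤ a ⬝ᵥ a + b ⬝ᵥ b) with h | h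
    · exact h
    · exfalso
      have hA : a ⬝ᵥ a = 0 := by
        have h1 := hdsn a
        have h2 := hdsn b
        linarith
      have hB : b ⬝ᵥ b = 0 := by
        have h1 := hdsn a
        linarith
      have ha0 : a = 0 := dotProduct_self_eq_zero.mp hA
      have hb0 : b = 0 := dotProduct_self_eq_zero.mp hB
      apply hη0
      funext i
      have : (η i).re = 0 := congrFun ha0 i
      have : (η i).im = 0 := congrFun hb0 i
      exact Complex.ext (congrFun ha0 i) (congrFun hb0 i)
  have hμre : 0 ≤ μ.re := by
    have h1 := hΩpos a
    have h2 := hΩpos b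
    have e1 : a ⬝ᵥ (Ω *ᵥ a) = μ.re * (a ⬝ᵥ a) - μ.im * (a ⬝ᵥ b) := by
      rw [heigre]; simp [dotProduct_sub, dotProduct_smul, smul_eq_mul]
    have e2 : b ⬝ᵥ (Ω *ᵥ b) = μ.im * (b ⬝ᵥ a) + μ.re * (b ⬝ᵥ b) := by
      rw [heigim]; simp [dotProduct_add, dotProduct_smul, smul_eq_mul]
    have hcomm : a ⬝ᵥ b = b ⬝ᵥ a := dotProduct_comm a b
    have key : 0 ≤ μ.re * (a ⬝ᵥ a + b ⬝ᵥ b) := by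
      have e3 : μ.re * (a ⬝ᵥ a + b ⬝ᵥ b) = a ⬝ᵥ (Ω *ᵥ a) + b ⬝ᵥ (Ω *ᵥ b) := by
        rw [e1, e2, hcomm]; ring
      linarith
    by_contra hcon
    push_neg at hcon
    have : μ.re * (a ⬝ᵥ a + b ⬝ᵥ b) < 0 := mul_neg_of_neg_of_pos hcon hab
    linarith
  -- complexified matrices
  set Hc := H.map Complex.ofReal with hHc
  set Rc := R.map Complex.ofReal with hRc
  set Ωc := Ω.map Complex.ofReal with hΩc
  have hrealc : (A.map Complex.ofReal) * Hc + (B₂.map Complex.ofReal) * Rc = -(Hc * Ωc) := by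
    rw [hHc, hRc, hΩc, ← aux_map_mul, ← aux_map_mul, ← aux_map_add, ← aux_map_mul, ← aux_map_neg,
      hreal]
  have hCcc : (C₁.map Complex.ofReal) * Hc + (D₁₂.map Complex.ofReal) * Rc = 0 := by
    rw [hHc, hRc, ← aux_map_mul, ← aux_map_mul, ← aux_map_add, hCc]
    ext i j; simp
  set u : Fin n → ℂ := Hc *ᵥ η with hu
  set w : Fin m₂ → ℂ := Rc *ᵥ η with hw
  refine ⟨-μ, by simpa using hμre, ?_⟩
  set Mbig := Matrix.fromBlocks (A.map Complex.ofReal - (-μ) • 1) (B₂.map Complex.ofReal)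
    (C₁.map Complex.ofReal) (D₁₂.map Complex.ofReal) with hMbig
  have hv0 : Mbig *ᵥ (Sum.elim u w) = 0 := by
    rw [hMbig, Matrix.fromBlocks_mulVec]
    simp only [Sum.elim_comp_inl, Sum.elim_comp_inr]
    have htop : (A.map Complex.ofReal - (-μ) • 1) *ᵥ u + (B₂.map Complex.ofReal) *ᵥ w = 0 := by
      rw [Matrix.sub_mulVec, Matrix.smul_mulVec, Matrix.one_mulVec]
      rw [hu, hw, Matrix.mulVec_mulVec, Matrix.mulVec_mulVec]
      have : (A.map Complex.ofReal * Hc) *ᵥ η + (B₂.map Complex.ofReal * Rc) *ᵥ η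
          = -(μ • (Hc *ᵥ η)) := by
        rw [← Matrix.add_mulVec, hrealc, Matrix.neg_mulVec, ← Matrix.mulVec_mulVec, heig,
          Matrix.mulVec_smul]
      rw [show (A.map Complex.ofReal * Hc) *ᵥ η - -μ • Hc *ᵥ η + (B₂.map Complex.ofReal * Rc) *ᵥ η
          = ((A.map Complex.ofReal * Hc) *ᵥ η + (B₂.map Complex.ofReal * Rc) *ᵥ η) + μ • (Hc *ᵥ η)
          by module, this]
      abel
    have hbot : (C₁.map Complex.ofReal) *ᵥ u + (D₁₂.map Complex.ofReal) *ᵥ w = 0 := by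
      rw [hu, hw, Matrix.mulVec_mulVec, Matrix.mulVec_mulVec, ← Matrix.add_mulVec, hCcc,
        Matrix.zero_mulVec]
    rw [htop, hbot]
    funext i
    cases i <;> rfl
  have hune : u ≠ 0 := by
    intro hu0
    apply hη0
    have hc0 : Hc *ᵥ η = 0 := hu.symm.trans hu0
    have hare : H *ᵥ a = 0 := by
      funext i
      have h5 := re_map_mulVec H η i
      rw [← hHc, hc0] at h5
      simpa [ha] using h5.symm
    have haim : H *ᵥ b = 0 := by
      funext i
      have h5 := im_map_mulVec H η i
      rw [← hHc, hc0] at h5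
      simpa [hb] using h5.symm
    have ha0 : a = 0 := by
      have := hinj (show H *ᵥ a = H *ᵥ 0 by simpa using hare)
      simpa using this
    have hb0 : b = 0 := by
      have := hinj (show H *ᵥ b = H *ᵥ 0 by simpa using haim)
      simpa using this
    funext i
    exact Complex.ext (congrFun ha0 i) (congrFun hb0 i)
  -- conclude on the rank
  have hsum := LinearMap.finrank_range_add_finrank_ker Mbig.mulVecLin
  rw [Module.finrank_fintype_fun_eq_card, Fintype.card_sum, Fintype.card_fin,
    Fintype.card_fin] at hsum
  have hkerpos : 0 < Module.finrank ℂ (LinearMap.ker Mbig.mulVecLin) := by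
    rcases Nat.eq_zero_or_pos (Module.finrank ℂ (LinearMap.ker Mbig.mulVecLin)) with h0 | h
    · exfalso
      have hbot : LinearMap.ker Mbig.mulVecLin = ⊥ := Submodule.finrank_eq_zero.mp h0
      have hmem : Sum.elim u w ∈ LinearMap.ker Mbig.mulVecLin := by
        rw [LinearMap.mem_ker]
        exact hv0
      rw [hbot, Submodule.mem_bot] at hmem
      exact hune (by funext i; exact congrFun hmem (Sum.inl i))
    · exact h
  have hrk : Mbig.rank = Module.finrank ℂ (LinearMap.range Mbig.mulVecLin) := rfl
  omega
end

section
/- Let λ_1, …, λ_r be real numbers and suppose for each j there exist η_j ∈ ℝ^n, ξ_j ∈ ℝ^{m_2} with Aη_j + B_2ξ_j = λ_j η_j and C_1η_j + D_12ξ_j = 0, with η_1, …, η_r linearly independent. Set H = (η_1,…,η_r), R = (ξ_1,…,ξ_r), X̂ = HHᵀ, Ŷ = RHᵀ. Then −He(AX̂ + B_2Ŷ) = −2 H Diag(λ_1,…,λ_r) Hᵀ; in particular, if all λ_j < 0 this matrix is positive semidefinite of rank r, so (γ=0, X̂, Ŷ) certifies non-strong-feasibility of the dual LMI of the H_∞ state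 feedback problem. -/
open Matrix

theorem stmt_14 (n m₂ p₁ r : ℕ) (A : Matrix (Fin n) (Fin n) ℝ)
    (B₂ : Matrix (Fin n) (Fin m₂) ℝ) (C₁ : Matrix (Fin p₁) (Fin n) ℝ)
    (D₁₂ : Matrix (Fin p₁) (Fin m₂) ℝ)
    (lam : Fin r → ℝ)
    (H : Matrix (Fin n) (Fin r) ℝ) (R : Matrix (Fin m₂) (Fin r) ℝ)
    (heig : ∀ j, A.mulVec (fun i => H i j) + B₂.mulVec (fun i => R i j)
        = lam j • (fun i => H i j))
    (hout : ∀ j, C₁.mulVec (fun i => H i j) + D₁₂.mulVec (fun i => R i j) = 0)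
    (hli : LinearIndependent ℝ (fun j => (fun i => H i j)))
    (Xhat : Matrix (Fin n) (Fin n) ℝ) (hXhat : Xhat = H * Hᵀ)
    (Yhat : Matrix (Fin m₂) (Fin n) ℝ) (hYhat : Yhat = R * Hᵀ) :
    ((-(A * Xhat + B₂ * Yhat)) - (A * Xhat + B₂ * Yhat)ᵀ
        = (-2 : ℝ) • (H * Matrix.diagonal lam * Hᵀ)) ∧
    ((∀ j, lam j < 0) →
      ((-(A * Xhat + B₂ * Yhat)) - (A * Xhat + B₂ * Yhat)ᵀ).PosSemidef ∧
      ((-(A * Xhat + B₂ * Yhat)) - (A * Xhat + B₂ * Yhat)ᵀ).rank = r) := by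
  have hkey : A * H + B₂ * R = H * Matrix.diagonal lam := by
    ext i j
    rw [Matrix.add_apply, Matrix.mul_diagonal]
    have := congrFun (heig j) i
    simp only [Pi.add_apply, mulVec, dotProduct, Pi.smul_apply, smul_eq_mul] at this
    simp only [Matrix.mul_apply]
    rw [this, mul_comm]
  have hform : A * Xhat + B₂ * Yhat = H * Matrix.diagonal lam * Hᵀ := by
    rw [hXhat, hYhat, ← Matrix.mul_assoc, ← Matrix.mul_assoc, ← Matrix.add_mul, hkey]
  have hsym : (H * Matrix.diagonal lam * Hᵀ)ᵀ = H * Matrix.diagonal lam * Hᵀ := by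
    rw [Matrix.transpose_mul, Matrix.transpose_mul, Matrix.transpose_transpose,
      Matrix.diagonal_transpose, Matrix.mul_assoc]
  have hmain : (-(A * Xhat + B₂ * Yhat)) - (A * Xhat + B₂ * Yhat)ᵀ
      = (-2 : ℝ) • (H * Matrix.diagonal lam * Hᵀ) := by
    rw [hform, hsym]
    ext i j
    simp [Matrix.sub_apply, Matrix.smul_apply]
    ring
  refine ⟨hmain, fun hneg => ?_⟩
  rw [hmain]
  set N : Matrix (Fin n) (Fin r) ℝ :=
    H * Matrix.diagonal (fun j => Real.sqrt (-2 * lam j)) with hN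
  have hDs : (Matrix.diagonal fun j => Real.sqrt (-2 * lam j))
      * (Matrix.diagonal fun j => Real.sqrt (-2 * lam j))
      = (-2 : ℝ) • Matrix.diagonal lam := by
    rw [Matrix.diagonal_mul_diagonal]
    have hfun : (fun j => Real.sqrt (-2 * lam j) * Real.sqrt (-2 * lam j))
        = (-2 : ℝ) • lam := by
      funext j
      have : Real.sqrt (-2 * lam j) * Real.sqrt (-2 * lam j) = -2 * lam j :=
        Real.mul_self_sqrt (by nlinarith [hneg j])
      simpa using this
    rw [hfun, Matrix.diagonal_smul]
  have hfac : (-2 : ℝ) • (H * Matrix.diagonal lam * Hᵀ) = N * Nᵀ := by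
    symm
    rw [hN, Matrix.transpose_mul, Matrix.diagonal_transpose, Matrix.mul_assoc H,
      ← Matrix.mul_assoc (Matrix.diagonal _) (Matrix.diagonal _), hDs,
      Matrix.smul_mul, Matrix.mul_smul, ← Matrix.mul_assoc]
  rw [hfac]
  constructor
  · have := Matrix.posSemidef_self_mul_conjTranspose N
    simpa using this
  · rw [Matrix.rank_self_mul_transpose, hN,
      Matrix.rank_mul_eq_left_of_isUnit_det _ _ ?_]
    · have : H.col = (fun j => (fun i => H i j)) := rfl
      rw [Matrix.rank_eq_finrank_span_cols, this, finrank_span_eq_card hli,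
        Fintype.card_fin]
    · rw [Matrix.det_diagonal]
      exact isUnit_iff_ne_zero.2 (ne_of_gt (Finset.prod_pos
        fun j _ => Real.sqrt_pos.2 (by nlinarith [hneg j])))
end

section
/- Let T = (Ĥ, J) be non-singular with Ĥ ∈ ℝ^{n×r} and write T^{−1} = [U_1; U_2] (row blocks with U_1 ∈ ℝ^{r×n}, U_2 ∈ ℝ^{(n−r)×n}). Suppose AĤ + B_2R̂ = Ĥ Λ and C_1Ĥ + D_12R̂ = 0, where Λ = Diag(λ_1,…,λ_r). For any K̃ ∈ ℝ^{m_2×(n−r)}, define K := (R̂, K̃) T^{−1}. Then T^{−1}(A + B_2K)T = [[Λ, U_1(AJ + B_2K̃)],[0_{(n−r)×r}, U_2(AJ + B_2K̃)]] and (C_1 + D_12K)T = [0_{p_1×r}, C_1J + D_12K̃]. -/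
open Matrix

lemma fromColumns_add' {m n₁ n₂ R : Type*} [Add R] (a c : Matrix m n₁ R)
    (b d : Matrix m n₂ R) :
    Matrix.fromCols a b + Matrix.fromCols c d = Matrix.fromCols (a + c) (b + d) := by
  ext i j; cases j <;> simp [Matrix.fromCols]

theorem stmt_18 (r s m₂ p₁ : ℕ)
    (A : Matrix (Fin r ⊕ Fin s) (Fin r ⊕ Fin s) ℝ)
    (B₂ : Matrix (Fin r ⊕ Fin s) (Fin m₂) ℝ)
    (C₁ : Matrix (Fin p₁) (Fin r ⊕ Fin s) ℝ)
    (D₁₂ : Matrix (Fin p₁) (Fin m₂) ℝ)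
    (Hhat : Matrix (Fin r ⊕ Fin s) (Fin r) ℝ) (J : Matrix (Fin r ⊕ Fin s) (Fin s) ℝ)
    (Rhat : Matrix (Fin m₂) (Fin r) ℝ)
    (lam : Fin r → ℝ)
    (T : Matrix (Fin r ⊕ Fin s) (Fin r ⊕ Fin s) ℝ)
    (hT : T = Matrix.fromCols Hhat J)
    (U₁ : Matrix (Fin r) (Fin r ⊕ Fin s) ℝ) (U₂ : Matrix (Fin s) (Fin r ⊕ Fin s) ℝ)
    (Tinv : Matrix (Fin r ⊕ Fin s) (Fin r ⊕ Fin s) ℝ)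
    (hTinv : Tinv = Matrix.fromRows U₁ U₂)
    (hinv₁ : T * Tinv = 1) (hinv₂ : Tinv * T = 1)
    (heig : A * Hhat + B₂ * Rhat = Hhat * Matrix.diagonal lam)
    (hout : C₁ * Hhat + D₁₂ * Rhat = 0)
    (Ktilde : Matrix (Fin m₂) (Fin s) ℝ)
    (K : Matrix (Fin m₂) (Fin r ⊕ Fin s) ℝ)
    (hK : K = Matrix.fromCols Rhat Ktilde * Tinv) :
    Tinv * (A + B₂ * K) * T
      = Matrix.fromBlocks (Matrix.diagonal lam) (U₁ * (A * J + B₂ * Ktilde))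
          0 (U₂ * (A * J + B₂ * Ktilde)) ∧
    (C₁ + D₁₂ * K) * T = Matrix.fromCols 0 (C₁ * J + D₁₂ * Ktilde) := by
  have hKT : K * T = Matrix.fromCols Rhat Ktilde := by
    rw [hK, Matrix.mul_assoc, hinv₂, Matrix.mul_one]
  -- block identities from Tinv * T = 1
  have hblocks : Matrix.fromBlocks (U₁ * Hhat) (U₁ * J) (U₂ * Hhat) (U₂ * J)
      = (1 : Matrix (Fin r ⊕ Fin s) (Fin r ⊕ Fin s) ℝ) := by
    rw [← Matrix.fromRows_mul_fromCols, ← hTinv, ← hT, hinv₂]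
  rw [← Matrix.fromBlocks_one] at hblocks
  obtain ⟨h11, -, h21, -⟩ := Matrix.fromBlocks_inj.mp hblocks
  have hAT : (A + B₂ * K) * T
      = Matrix.fromCols (Hhat * Matrix.diagonal lam) (A * J + B₂ * Ktilde) := by
    rw [Matrix.add_mul, Matrix.mul_assoc, hKT, hT, Matrix.mul_fromCols,
      Matrix.mul_fromCols, fromColumns_add', heig]
  constructor
  · rw [Matrix.mul_assoc, hAT, hTinv,
      Matrix.fromRows_mul_fromCols, ← Matrix.mul_assoc, ← Matrix.mul_assoc,
      h11, h21, Matrix.one_mul, Matrix.zero_mul]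
  · rw [Matrix.add_mul, Matrix.mul_assoc, hKT, hT, Matrix.mul_fromCols,
      Matrix.mul_fromCols, fromColumns_add', hout]
end
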